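/- arXiv:1407.2464 — 2 statements merged into one kernel-verified Lean document; each statement's English description precedes it below -/
import Mathlib

section
/- Let 𝓑 be a connected building set on a finite ground set S that is closed under intersection, and for B ⊆ S let ȳ_B be the number of unordered pairs {s, t} of elements of S (allowing s = t) with π(s,t) = B. Then the removahedron of 𝓑 coincides with the Minkowski sum of dilated faces of the standard simplex with these coefficients: Remo(𝓑) = Σ_{B ∈ 𝓑} ȳ_B · Δ_B, as an equality of subsets of ℝ^S. -/
open Pointwise

/-- `𝓑` is a building set on the finite ground set `V`: a collection of
nonempty subsets of `V` such that (B1) the union of two intersecting elements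
is again an element, and (B2) all singletons are elements. -/
def IsBuilding {V : Type*} [DecidableEq V] (𝓑 : Set (Finset V)) : Prop :=
  (∀ B ∈ 𝓑, B.Nonempty) ∧
  (∀ B ∈ 𝓑, ∀ B' ∈ 𝓑, (B ∩ B').Nonempty → B ∪ B' ∈ 𝓑) ∧
  (∀ s : V, ({s} : Finset V) ∈ 𝓑)

/-- `P` is the `𝓑`-path `π(s,t)`: the inclusion-smallest element of `𝓑`
containing both `s` and `t`. -/
def IsMinPath {V : Type*} (𝓑 : Set (Finset V)) (s t : V) (P : Finset V) : Prop :=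
  P ∈ 𝓑 ∧ s ∈ P ∧ t ∈ P ∧ ∀ B ∈ 𝓑, s ∈ B → t ∈ B → P ⊆ B

/-- The dilation coefficient `ȳ_B`: the number of unordered pairs `{s, t}` of
elements of the ground set (allowing `s = t`) whose `𝓑`-path `π(s,t)` equals
`B`. -/
noncomputable def ybar {V : Type*} (𝓑 : Set (Finset V)) (B : Finset V) : ℕ :=
  Set.ncard {z : Sym2 V | ∃ s t : V, z = Sym2.mk s t ∧ IsMinPath 𝓑 s t B}

/-- The face `Δ_T = conv{e_t : t ∈ T}` of the standard simplex in `ℝ^V`. -/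
noncomputable def simplexFace {V : Type*} [DecidableEq V] (T : Finset V) :
    Set (V → ℝ) :=
  convexHull ℝ {x : V → ℝ | ∃ t ∈ T, x = Pi.single t 1}

/-- The removahedron of `𝓑`: the points of the hyperplane
`Σ_s x_s = C(|V|+1, 2)` satisfying `Σ_{b ∈ B} x_b ≥ C(|B|+1, 2)` for all
`B ∈ 𝓑`. -/
def Remo {V : Type*} [Fintype V] (𝓑 : Set (Finset V)) : Set (V → ℝ) :=
  {x : V → ℝ | (∑ s : V, x s) = ((Fintype.card V + 1).choose 2 : ℝ) ∧
    ∀ B ∈ 𝓑, ((B.card + 1).choose 2 : ℝ) ≤ ∑ b ∈ B, x b}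

set_option linter.unusedSectionVars false
set_option maxHeartbeats 1000000
namespace RemoAux

open Finset

variable {V : Type*} [Fintype V] [DecidableEq V]

/-- In a nonempty intersection-closed finite family there is a minimum element. -/
lemma exists_min (𝒜 : Finset (Finset V)) (hne : 𝒜.Nonempty)
    (hcap : ∀ A ∈ 𝒜, ∀ B ∈ 𝒜, A ∩ B ∈ 𝒜) : ∃ M ∈ 𝒜, ∀ A ∈ 𝒜, M ⊆ A := by
  obtain ⟨M, hM, hmin⟩ := 𝒜.exists_min_image (fun A => A.card) hne
  refine ⟨M, hM, fun A hA => ?_⟩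
  have h1 : M ∩ A ∈ 𝒜 := hcap M hM A hA
  have h2 : M.card ≤ (M ∩ A).card := hmin _ h1
  have h3 : M ∩ A ⊆ M := inter_subset_left
  have : M ∩ A = M := Finset.eq_of_subset_of_card_le h3 h2
  intro x hx
  rw [← this] at hx
  exact (mem_inter.1 hx).2

section building

variable (𝓑 : Finset (Finset V)) (hbuild : IsBuilding (𝓑 : Set (Finset V)))
  (hconn : (Finset.univ : Finset V) ∈ 𝓑)
  (hclosed : ∀ B ∈ 𝓑, ∀ B' ∈ 𝓑, (B ∩ B').Nonempty → B ∩ B' ∈ 𝓑)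

set_option linter.unusedSectionVars false

include hconn hclosed

lemma path_exists (s t : V) : ∃ P, IsMinPath (𝓑 : Set (Finset V)) s t P := by
  classical
  obtain ⟨M, hM, hmin⟩ := exists_min (𝓑.filter (fun B => s ∈ B ∧ t ∈ B))
    ⟨univ, by simp [hconn]⟩
    (by
      intro A hA B hB
      simp only [mem_filter] at hA hB ⊢
      exact ⟨hclosed A hA.1 B hB.1 ⟨s, mem_inter.2 ⟨hA.2.1, hB.2.1⟩⟩,
        mem_inter.2 ⟨hA.2.1, hB.2.1⟩, mem_inter.2 ⟨hA.2.2, hB.2.2⟩⟩)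
  simp only [mem_filter] at hM
  exact ⟨M, hM.1, hM.2.1, hM.2.2, fun B hB hs ht => hmin B (by simp only [mem_filter]; exact ⟨hB, hs, ht⟩)⟩

omit hconn hclosed in
lemma path_unique {s t : V} {P P' : Finset V} (h : IsMinPath (𝓑 : Set (Finset V)) s t P)
    (h' : IsMinPath (𝓑 : Set (Finset V)) s t P') : P = P' :=
  Finset.Subset.antisymm (h.2.2.2 P' h'.1 h'.2.1 h'.2.2.1) (h'.2.2.2 P h.1 h.2.1 h.2.2.1)

/-- The `𝓑`-path as a function on unordered pairs. -/
noncomputable def Pi2 : Sym2 V → Finset V :=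
  Sym2.lift ⟨fun s t => (path_exists 𝓑 hconn hclosed s t).choose, by
    intro s t
    exact path_unique 𝓑
      ((path_exists 𝓑 hconn hclosed s t).choose_spec)
      (by
        obtain ⟨h1, h2, h3, h4⟩ := (path_exists 𝓑 hconn hclosed t s).choose_spec
        exact ⟨h1, h3, h2, fun B hB hs ht => h4 B hB ht hs⟩)⟩

lemma pi2_spec (s t : V) : IsMinPath (𝓑 : Set (Finset V)) s t (Pi2 𝓑 hconn hclosed s(s, t)) :=
  (path_exists 𝓑 hconn hclosed s t).choose_spec

lemma isMinPath_iff (s t : V) (B : Finset V) :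
    IsMinPath (𝓑 : Set (Finset V)) s t B ↔ Pi2 𝓑 hconn hclosed s(s, t) = B :=
  ⟨fun h => path_unique 𝓑 (pi2_spec 𝓑 hconn hclosed s t) h,
   fun h => h ▸ pi2_spec 𝓑 hconn hclosed s t⟩

lemma mem_pi2 (z : Sym2 V) (a : V) (ha : a ∈ z) : a ∈ Pi2 𝓑 hconn hclosed z := by
  induction z using Sym2.ind with
  | _ s t =>
    obtain ⟨h1, h2, h3, _⟩ := pi2_spec 𝓑 hconn hclosed s t
    rcases Sym2.mem_iff.1 ha with rfl | rfl
    · exact h2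
    · exact h3

lemma pi2_mem (z : Sym2 V) : Pi2 𝓑 hconn hclosed z ∈ 𝓑 := by
  induction z using Sym2.ind with
  | _ s t => exact (pi2_spec 𝓑 hconn hclosed s t).1

lemma pi2_min (z : Sym2 V) (B : Finset V) (hB : B ∈ 𝓑) (h : ∀ a ∈ z, a ∈ B) :
    Pi2 𝓑 hconn hclosed z ⊆ B := by
  induction z using Sym2.ind with
  | _ s t =>
    exact (pi2_spec 𝓑 hconn hclosed s t).2.2.2 B hB (h s (Sym2.mem_mk_left s t))
      (h t (Sym2.mem_mk_right s t))

open scoped Classical in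
lemma ybar_eq (B : Finset V) :
    ybar (𝓑 : Set (Finset V)) B
      = (Finset.univ.filter (fun z : Sym2 V => Pi2 𝓑 hconn hclosed z = B)).card := by
  classical
  have : {z : Sym2 V | ∃ s t : V, z = Sym2.mk s t ∧ IsMinPath (𝓑 : Set (Finset V)) s t B}
      = ↑(Finset.univ.filter (fun z : Sym2 V => Pi2 𝓑 hconn hclosed z = B)) := by
    ext z
    induction z using Sym2.ind with
    | _ a b =>
      simp only [Set.mem_setOf_eq, coe_filter, mem_univ, true_and, Set.mem_setOf_eq]
      constructor
      · rintro ⟨s, t, hz, hP⟩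
        rw [isMinPath_iff 𝓑 hconn hclosed] at hP
        rw [← hP, hz]
      · intro h
        exact ⟨a, b, rfl, (isMinPath_iff 𝓑 hconn hclosed a b B).2 h⟩
  rw [ybar, this, Set.ncard_coe_finset]

omit hconn hclosed in
include hbuild in
lemma union_mem_building (s : V) (𝒜 : Finset (Finset V)) (hne : 𝒜.Nonempty)
    (h : ∀ A ∈ 𝒜, A ∈ 𝓑 ∧ s ∈ A) : 𝒜.sup id ∈ 𝓑 ∧ s ∈ 𝒜.sup id := by
  classical
  induction hne using Finset.Nonempty.cons_induction with
  | singleton A => simpa using h A (by simp)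
  | cons A 𝒜' hA hne ih =>
    have hA' := h A (Finset.mem_cons_self _ _)
    have ih' := ih (fun A' hA' => h A' (Finset.mem_cons.2 (Or.inr hA')))
    rw [Finset.sup_cons]
    have hmem : (A ∪ 𝒜'.sup id : Finset V) ∈ 𝓑 := by
      have := hbuild.2.1 A (by exact_mod_cast hA'.1) (𝒜'.sup id) (by exact_mod_cast ih'.1)
        ⟨s, Finset.mem_inter.2 ⟨hA'.2, ih'.2⟩⟩
      exact_mod_cast this
    constructor
    · simpa [Finset.sup_eq_union] using hmem
    · simp only [id, Finset.sup_eq_union] at *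
      exact Finset.mem_union.2 (Or.inl hA'.2)

omit hconn hclosed in
/-- The `𝓑`-component of `s` inside `T`. -/
noncomputable def compOf (T : Finset V) (s : V) : Finset V :=
  (𝓑.filter (fun B => s ∈ B ∧ B ⊆ T)).sup id

omit hconn hclosed in
include hbuild in
lemma compOf_mem {T : Finset V} {s : V} (hs : s ∈ T) :
    compOf 𝓑 T s ∈ 𝓑 ∧ s ∈ compOf 𝓑 T s := by
  classical
  refine union_mem_building 𝓑 hbuild s _ ⟨{s}, ?_⟩ ?_
  · rw [mem_filter]
    exact ⟨by exact_mod_cast hbuild.2.2 s, by simp, by simpa using hs⟩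
  · intro A hA
    simp only [mem_filter] at hA
    exact ⟨hA.1, hA.2.1⟩

omit hconn hclosed in
lemma compOf_subset (T : Finset V) (s : V) : compOf 𝓑 T s ⊆ T := by
  classical
  show compOf 𝓑 T s ≤ T
  apply Finset.sup_le
  intro B hB
  simp only [mem_filter] at hB
  exact hB.2.2

omit hconn hclosed in
lemma subset_compOf {T B : Finset V} {s : V} (hB : B ∈ 𝓑) (hs : s ∈ B) (hBT : B ⊆ T) :
    B ⊆ compOf 𝓑 T s := by
  classical
  have h : B ∈ 𝓑.filter (fun B => s ∈ B ∧ B ⊆ T) := by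
    rw [Finset.mem_filter]; exact ⟨hB, hs, hBT⟩
  have h2 := Finset.le_sup (f := id) h
  exact h2

omit hconn hclosed in
include hbuild in
lemma compOf_eq {T : Finset V} {s t : V} (hs : s ∈ T) (ht : t ∈ compOf 𝓑 T s) :
    compOf 𝓑 T s = compOf 𝓑 T t := by
  obtain ⟨hmem, hsmem⟩ := compOf_mem 𝓑 hbuild hs
  have h1 : compOf 𝓑 T s ⊆ compOf 𝓑 T t :=
    subset_compOf 𝓑 hmem ht (compOf_subset 𝓑 T s)
  have ht' : t ∈ T := compOf_subset 𝓑 T s ht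
  obtain ⟨hmem', htmem⟩ := compOf_mem 𝓑 hbuild ht'
  have h2 : compOf 𝓑 T t ⊆ compOf 𝓑 T s :=
    subset_compOf 𝓑 hmem' (h1 hsmem) (compOf_subset 𝓑 T t)
  exact Finset.Subset.antisymm h1 h2

omit hconn hclosed in
/-- The `𝓑`-components of `T`. -/
noncomputable def comps (T : Finset V) : Finset (Finset V) :=
  T.image (compOf 𝓑 T)

omit hconn hclosed in
include hbuild in
lemma comps_spec {T C : Finset V} (hC : C ∈ comps 𝓑 T) :
    C ∈ 𝓑 ∧ C ⊆ T ∧ ∀ a ∈ C, compOf 𝓑 T a = C := by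
  classical
  obtain ⟨s, hs, rfl⟩ := Finset.mem_image.1 hC
  refine ⟨(compOf_mem 𝓑 hbuild hs).1, compOf_subset 𝓑 T s, fun a ha => ?_⟩
  exact (compOf_eq 𝓑 hbuild hs ha).symm

omit hconn hclosed in
include hbuild in
lemma comps_disjoint {T C C' : Finset V} (hC : C ∈ comps 𝓑 T) (hC' : C' ∈ comps 𝓑 T)
    (hne : C ≠ C') : Disjoint C C' := by
  classical
  rw [Finset.disjoint_left]
  intro a ha ha'
  exact hne (((comps_spec 𝓑 hbuild hC).2.2 a ha).symm.trans
    ((comps_spec 𝓑 hbuild hC').2.2 a ha'))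

omit hconn hclosed in
include hbuild in
lemma comps_cover (T : Finset V) : (comps 𝓑 T).biUnion id = T := by
  classical
  ext a
  simp only [Finset.mem_biUnion, id, comps, Finset.mem_image]
  constructor
  · rintro ⟨C, ⟨s, hs, rfl⟩, ha⟩
    exact compOf_subset 𝓑 T s ha
  · intro ha
    exact ⟨compOf 𝓑 T a, ⟨a, ha, rfl⟩, (compOf_mem 𝓑 hbuild ha).2⟩

include hbuild in
open scoped Classical in
lemma filter_pi2_subset (T : Finset V) :
    Finset.univ.filter (fun z : Sym2 V => Pi2 𝓑 hconn hclosed z ⊆ T)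
      = (comps 𝓑 T).biUnion Finset.sym2 := by
  ext z
  simp only [Finset.mem_filter, Finset.mem_univ, true_and, Finset.mem_biUnion]
  constructor
  · intro h
    induction z using Sym2.ind with
    | _ a b =>
      have ha : a ∈ Pi2 𝓑 hconn hclosed s(a, b) :=
        mem_pi2 𝓑 hconn hclosed _ a (Sym2.mem_mk_left a b)
      have hb : b ∈ Pi2 𝓑 hconn hclosed s(a, b) :=
        mem_pi2 𝓑 hconn hclosed _ b (Sym2.mem_mk_right a b)
      have haT : a ∈ T := h ha
      refine ⟨compOf 𝓑 T a, Finset.mem_image.2 ⟨a, haT, rfl⟩, ?_⟩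
      have hsub : Pi2 𝓑 hconn hclosed s(a, b) ⊆ compOf 𝓑 T a :=
        subset_compOf 𝓑 (pi2_mem 𝓑 hconn hclosed _) ha h
      rw [Finset.mk_mem_sym2_iff]
      exact ⟨hsub ha, hsub hb⟩
  · rintro ⟨C, hC, hz⟩
    obtain ⟨hCB, hCT, -⟩ := comps_spec 𝓑 hbuild hC
    refine subset_trans (pi2_min 𝓑 hconn hclosed z C hCB ?_) hCT
    intro a ha
    exact (Finset.mem_sym2_iff.1 hz) a ha

include hbuild in
lemma g_count (T : Finset V) :
    ∑ B ∈ 𝓑.filter (· ⊆ T), ybar (𝓑 : Set (Finset V)) B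
      = ∑ C ∈ comps 𝓑 T, (C.card + 1).choose 2 := by
  classical
  have hfib : (Finset.univ.filter (fun z : Sym2 V => Pi2 𝓑 hconn hclosed z ⊆ T)).card
      = ∑ B ∈ 𝓑.filter (· ⊆ T), ybar (𝓑 : Set (Finset V)) B := by
    rw [Finset.card_eq_sum_card_fiberwise
      (f := Pi2 𝓑 hconn hclosed) (t := 𝓑.filter (· ⊆ T))
      (by
        intro z hz
        simp only [Finset.coe_filter, Finset.mem_coe, Set.mem_setOf_eq, Finset.mem_filter, Finset.mem_univ, true_and] at hz ⊢
        exact ⟨pi2_mem 𝓑 hconn hclosed z, hz⟩)]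
    refine Finset.sum_congr rfl (fun B hB => ?_)
    simp only [Finset.mem_filter] at hB
    rw [ybar_eq 𝓑 hconn hclosed]
    congr 1
    ext z
    simp only [Finset.mem_filter, Finset.mem_univ, true_and, and_iff_right_iff_imp]
    intro h
    rw [h]; exact hB.2
  rw [← hfib, filter_pi2_subset 𝓑 hbuild hconn hclosed,
    Finset.card_biUnion (fun C hC C' hC' hne =>
      Finset.disjoint_left.2 (fun z hz hz' => by
        induction z using Sym2.ind with
        | _ a b =>
          have ha : a ∈ C := (Finset.mk_mem_sym2_iff.1 hz).1
          have ha' : a ∈ C' := (Finset.mk_mem_sym2_iff.1 hz').1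
          exact (Finset.disjoint_left.1 (comps_disjoint 𝓑 hbuild hC hC' hne) ha) ha'))]
  exact Finset.sum_congr rfl (fun C _ => Finset.card_sym2 C)

include hbuild in
lemma g_self {B : Finset V} (hB : B ∈ 𝓑) :
    ∑ B' ∈ 𝓑.filter (· ⊆ B), ybar (𝓑 : Set (Finset V)) B' = (B.card + 1).choose 2 := by
  classical
  rw [g_count 𝓑 hbuild hconn hclosed]
  have hcomp : comps 𝓑 B = {B} := by
    have hne : B.Nonempty := hbuild.1 B (by exact_mod_cast hB)
    apply Finset.Subset.antisymm
    · intro C hC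
      obtain ⟨s, hs, rfl⟩ := Finset.mem_image.1 hC
      rw [Finset.mem_singleton]
      exact Finset.Subset.antisymm (compOf_subset 𝓑 B s)
        (subset_compOf 𝓑 hB hs Finset.Subset.rfl)
    · intro C hC
      rw [Finset.mem_singleton] at hC
      rw [hC]
      obtain ⟨s, hs⟩ := hne
      refine Finset.mem_image.2 ⟨s, hs, ?_⟩
      exact Finset.Subset.antisymm (compOf_subset 𝓑 B s)
        (subset_compOf 𝓑 hB hs Finset.Subset.rfl)
  rw [hcomp, Finset.sum_singleton]

omit hconn hclosed in
/-- The lower-bound function of the generalized permutahedron, real-valued. -/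
noncomputable def gR (T : Finset V) : ℝ :=
  ∑ B ∈ 𝓑.filter (· ⊆ T), (ybar (𝓑 : Set (Finset V)) B : ℝ)

include hbuild in
lemma gR_eq_choose {B : Finset V} (hB : B ∈ 𝓑) :
    gR 𝓑 B = ((B.card + 1).choose 2 : ℝ) := by
  rw [gR, ← Nat.cast_sum, g_self 𝓑 hbuild hconn hclosed hB]

omit hconn hclosed in
lemma gR_nonneg (T : Finset V) : 0 ≤ gR 𝓑 T :=
  Finset.sum_nonneg (fun B _ => Nat.cast_nonneg _)

end building

section face

lemma simplexFace_subset {B : Finset V} :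
    simplexFace B ⊆ {x : V → ℝ | (∀ s, 0 ≤ x s) ∧ (∀ s, s ∉ B → x s = 0) ∧ ∑ s, x s = 1} := by
  apply convexHull_min
  · rintro x ⟨t, ht, rfl⟩
    refine ⟨fun s => ?_, fun s hs => ?_, ?_⟩
    · rw [Pi.single_apply]
      split <;> norm_num
    · rw [Pi.single_apply, if_neg]
      rintro rfl; exact hs ht
    · exact Fintype.sum_pi_single' t 1
  · rintro x hx y hy a b ha hb hab
    refine ⟨fun s => ?_, fun s hs => ?_, ?_⟩
    · have := add_nonneg (mul_nonneg ha (hx.1 s)) (mul_nonneg hb (hy.1 s))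
      simpa [Pi.add_apply, smul_eq_mul] using this
    · have h1 := hx.2.1 s hs
      have h2 := hy.2.1 s hs
      simp [Pi.add_apply, smul_eq_mul, h1, h2]
    · have : ∑ s, (a • x + b • y) s = a * (∑ s, x s) + b * (∑ s, y s) := by
        simp [Finset.sum_add_distrib, Finset.mul_sum]
      rw [this, hx.2.2, hy.2.2]
      linarith

lemma single_mem_simplexFace {B : Finset V} {t : V} (ht : t ∈ B) :
    Pi.single t (1 : ℝ) ∈ simplexFace B :=
  subset_convexHull ℝ _ ⟨t, ht, rfl⟩

end face

section incl

variable (𝓑 : Finset (Finset V)) (hbuild : IsBuilding (𝓑 : Set (Finset V)))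
  (hconn : (Finset.univ : Finset V) ∈ 𝓑)
  (hclosed : ∀ B ∈ 𝓑, ∀ B' ∈ 𝓑, (B ∩ B').Nonempty → B ∩ B' ∈ 𝓑)

include hbuild hconn hclosed in
lemma sum_faces_subset_remo :
    (∑ B ∈ 𝓑, (ybar (𝓑 : Set (Finset V)) B : ℝ) • simplexFace B) ⊆
      Remo (𝓑 : Set (Finset V)) := by
  classical
  intro x hx
  rw [Set.mem_finset_sum] at hx
  obtain ⟨u, hu, hsum⟩ := hx
  -- decompose each u B
  have hrep : ∀ B ∈ 𝓑, ∃ w ∈ simplexFace B, u B = (ybar (𝓑 : Set (Finset V)) B : ℝ) • w := by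
    intro B hB
    obtain ⟨w, hw, hw2⟩ := Set.mem_smul_set.1 (hu hB)
    exact ⟨w, hw, hw2.symm⟩
  choose w hw hw2 using hrep
  -- basic facts about each w
  have hface : ∀ B (hB : B ∈ 𝓑), (∀ s, 0 ≤ w B hB s) ∧ (∀ s, s ∉ B → w B hB s = 0) ∧
      ∑ s, w B hB s = 1 := fun B hB => simplexFace_subset (hw B hB)
  -- partial sums of u B over a subset T of V
  have key : ∀ (T : Finset V), ∀ B (hB : B ∈ 𝓑),
      (if B ⊆ T then (ybar (𝓑 : Set (Finset V)) B : ℝ) else 0) ≤ ∑ t ∈ T, u B t := by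
    intro T B hB
    rw [hw2 B hB]
    have hnn : (0:ℝ) ≤ ∑ t ∈ T, (ybar (𝓑 : Set (Finset V)) B : ℝ) * w B hB t :=
      Finset.sum_nonneg fun t _ => mul_nonneg (Nat.cast_nonneg _) ((hface B hB).1 t)
    split
    · next hBT =>
      have heq : ∑ t ∈ T, w B hB t = 1 := by
        rw [← (hface B hB).2.2]
        exact Finset.sum_subset (Finset.subset_univ T) (fun s _ hs =>
          (hface B hB).2.1 s (fun hsB => hs (hBT hsB)))
      refine le_of_eq ?_
      calc (ybar (𝓑 : Set (Finset V)) B : ℝ)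
          = (ybar (𝓑 : Set (Finset V)) B : ℝ) * ∑ t ∈ T, w B hB t := by rw [heq, mul_one]
        _ = ∑ t ∈ T, (ybar (𝓑 : Set (Finset V)) B : ℝ) * w B hB t := by rw [Finset.mul_sum]
        _ = ∑ t ∈ T, ((ybar (𝓑 : Set (Finset V)) B : ℝ) • w B hB) t := by
            simp [smul_eq_mul]
    · simpa [smul_eq_mul] using hnn
  have hsum' : ∀ (T : Finset V),
      ∑ t ∈ T, x t = ∑ B ∈ 𝓑, ∑ t ∈ T, u B t := by
    intro T
    rw [Finset.sum_comm]
    refine Finset.sum_congr rfl fun t _ => ?_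
    rw [← hsum, Finset.sum_apply]
  have hfilter : 𝓑.filter (· ⊆ (Finset.univ : Finset V)) = 𝓑 :=
    Finset.filter_true_of_mem (fun B _ => Finset.subset_univ B)
  constructor
  · rw [hsum' Finset.univ]
    have hterm : ∀ B ∈ 𝓑, ∑ t, u B t = (ybar (𝓑 : Set (Finset V)) B : ℝ) := by
      intro B hB
      rw [hw2 B hB]
      simp only [Pi.smul_apply, smul_eq_mul, ← Finset.mul_sum, (hface B hB).2.2, mul_one]
    rw [Finset.sum_congr rfl hterm]
    have h1 := gR_eq_choose 𝓑 hbuild hconn hclosed hconn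
    rw [gR, hfilter, Finset.card_univ] at h1
    exact h1
  · intro B hB
    have hB' : B ∈ 𝓑 := by exact_mod_cast hB
    have h2 : ∑ B' ∈ 𝓑, (if B' ⊆ B then (ybar (𝓑 : Set (Finset V)) B' : ℝ) else 0)
        ≤ ∑ B' ∈ 𝓑, ∑ t ∈ B, u B' t :=
      Finset.sum_le_sum (fun B' hB'' => key B B' hB'')
    rw [← Finset.sum_filter] at h2
    rw [hsum' B]
    calc ((B.card + 1).choose 2 : ℝ) = gR 𝓑 B := (gR_eq_choose 𝓑 hbuild hconn hclosed hB').symm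
      _ ≤ _ := h2

/-- The generalized permutahedron with all subset inequalities. -/
def Qset : Set (V → ℝ) :=
  {x : V → ℝ | (∑ s : V, x s) = gR 𝓑 Finset.univ ∧
    ∀ T : Finset V, gR 𝓑 T ≤ ∑ t ∈ T, x t}

include hbuild hconn hclosed in
lemma remo_subset_Q : Remo (𝓑 : Set (Finset V)) ⊆ Qset 𝓑 := by
  classical
  intro x hx
  have hfilter : 𝓑.filter (· ⊆ (Finset.univ : Finset V)) = 𝓑 :=
    Finset.filter_true_of_mem (fun B _ => Finset.subset_univ B)
  have hgRuniv : gR 𝓑 Finset.univ = ((Fintype.card V + 1).choose 2 : ℝ) := by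
    have h1 := gR_eq_choose 𝓑 hbuild hconn hclosed hconn
    rwa [Finset.card_univ] at h1
  constructor
  · rw [hgRuniv]; exact hx.1
  · intro T
    have hdisj : Set.PairwiseDisjoint (↑(comps 𝓑 T) : Set (Finset V)) id := by
      intro C hC C' hC' hne
      exact comps_disjoint 𝓑 hbuild (by exact_mod_cast hC) (by exact_mod_cast hC') hne
    have hcover := comps_cover 𝓑 hbuild T
    have hsplit : ∑ t ∈ T, x t = ∑ C ∈ comps 𝓑 T, ∑ t ∈ C, x t := by
      conv_lhs => rw [← hcover]
      exact Finset.sum_biUnion hdisj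
    have hgT : gR 𝓑 T = ∑ C ∈ comps 𝓑 T, (((C.card + 1).choose 2 : ℕ) : ℝ) := by
      rw [gR, ← Nat.cast_sum, g_count 𝓑 hbuild hconn hclosed, Nat.cast_sum]
    rw [hgT, hsplit]
    refine Finset.sum_le_sum (fun C hC => ?_)
    exact hx.2 C (by exact_mod_cast (comps_spec 𝓑 hbuild hC).1)

omit hbuild hconn hclosed in
lemma Q_convex : Convex ℝ (Qset 𝓑) := by
  rintro x hx y hy a b ha hb hab
  constructor
  · have : ∑ s, (a • x + b • y) s = a * (∑ s, x s) + b * (∑ s, y s) := by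
      simp [Finset.sum_add_distrib, Finset.mul_sum]
    rw [this, hx.1, hy.1, ← add_mul, hab, one_mul]
  · intro T
    have : ∑ t ∈ T, (a • x + b • y) t = a * (∑ t ∈ T, x t) + b * (∑ t ∈ T, y t) := by
      simp [Finset.sum_add_distrib, Finset.mul_sum]
    rw [this]
    calc gR 𝓑 T = a * gR 𝓑 T + b * gR 𝓑 T := by rw [← add_mul, hab, one_mul]
      _ ≤ a * (∑ t ∈ T, x t) + b * (∑ t ∈ T, y t) := by
          gcongr <;> [exact hx.2 T; exact hy.2 T]

omit hbuild hconn hclosed in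
lemma Q_isClosed : IsClosed (Qset 𝓑) := by
  have h1 : IsClosed {x : V → ℝ | (∑ s : V, x s) = gR 𝓑 Finset.univ} :=
    isClosed_eq (by continuity) continuous_const
  have h2 : ∀ T : Finset V, IsClosed {x : V → ℝ | gR 𝓑 T ≤ ∑ t ∈ T, x t} :=
    fun T => isClosed_le continuous_const (by continuity)
  have : Qset 𝓑 = {x : V → ℝ | (∑ s : V, x s) = gR 𝓑 Finset.univ} ∩
      ⋂ T : Finset V, {x : V → ℝ | gR 𝓑 T ≤ ∑ t ∈ T, x t} := by
    ext x
    simp [Qset, Set.mem_iInter]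
  rw [this]
  exact h1.inter (isClosed_iInter h2)

omit hbuild hconn hclosed in
lemma Q_isCompact : IsCompact (Qset 𝓑) := by
  refine IsCompact.of_isClosed_subset (isCompact_Icc
    (a := (0 : V → ℝ)) (b := fun _ => gR 𝓑 Finset.univ)) (Q_isClosed 𝓑) ?_
  intro x hx
  constructor
  · intro s
    have h1 := hx.2 {s}
    have h2 : gR 𝓑 {s} ≥ 0 := gR_nonneg 𝓑 _
    simp only [Finset.sum_singleton] at h1
    show (0:ℝ) ≤ x s
    linarith
  · intro s
    show x s ≤ gR 𝓑 Finset.univ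
    have h1 := hx.2 (Finset.univ.erase s)
    have h2 : ∑ t ∈ Finset.univ.erase s, x t + x s = ∑ t : V, x t :=
      Finset.sum_erase_add _ _ (Finset.mem_univ s)
    have h3 : gR 𝓑 (Finset.univ.erase s) ≥ 0 := gR_nonneg 𝓑 _
    have h4 := hx.1
    linarith

omit hbuild hconn hclosed in
lemma gR_supermodular (T U : Finset V) :
    gR 𝓑 T + gR 𝓑 U ≤ gR 𝓑 (T ∪ U) + gR 𝓑 (T ∩ U) := by
  classical
  simp only [gR, Finset.sum_filter, ← Finset.sum_add_distrib]
  refine Finset.sum_le_sum (fun B _ => ?_)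
  by_cases hT : B ⊆ T <;> by_cases hU : B ⊆ U
  · rw [if_pos hT, if_pos hU, if_pos (hT.trans Finset.subset_union_left),
      if_pos (Finset.subset_inter hT hU)]
  · rw [if_pos hT, if_neg hU, if_pos (hT.trans Finset.subset_union_left), add_zero]
    have : (0:ℝ) ≤ if B ⊆ T ∩ U then (ybar (𝓑 : Set (Finset V)) B : ℝ) else 0 := by
      split <;> simp
    linarith
  · rw [if_neg hT, if_pos hU, if_pos (hU.trans Finset.subset_union_right), zero_add]
    have : (0:ℝ) ≤ if B ⊆ T ∩ U then (ybar (𝓑 : Set (Finset V)) B : ℝ) else 0 := by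
      split <;> simp
    linarith
  · rw [if_neg hT, if_neg hU, add_zero]
    have h1 : (0:ℝ) ≤ if B ⊆ T ∪ U then (ybar (𝓑 : Set (Finset V)) B : ℝ) else 0 := by
      split <;> simp
    have h2 : (0:ℝ) ≤ if B ⊆ T ∩ U then (ybar (𝓑 : Set (Finset V)) B : ℝ) else 0 := by
      split <;> simp
    linarith

include hbuild in
omit hconn hclosed in
lemma gR_empty : gR 𝓑 ∅ = 0 := by
  classical
  rw [gR]
  have : 𝓑.filter (· ⊆ (∅ : Finset V)) = ∅ := by
    rw [Finset.filter_eq_empty_iff]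
    intro B hB h
    have hne := hbuild.1 B (by exact_mod_cast hB)
    rw [Finset.subset_empty] at h
    exact (by simpa [h] using hne : (∅ : Finset V).Nonempty).ne_empty rfl
  rw [this, Finset.sum_empty]

include hbuild hconn hclosed in
lemma extremePoints_subset_sum :
    (Qset 𝓑).extremePoints ℝ ⊆ ∑ B ∈ 𝓑, (ybar (𝓑 : Set (Finset V)) B : ℝ) • simplexFace B := by
  classical
  intro x hxe
  obtain ⟨hxQ, hext⟩ := mem_extremePoints.1 hxe
  haveI : Nonempty V := by
    obtain ⟨v, -⟩ := hbuild.1 Finset.univ (by exact_mod_cast hconn)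
    exact ⟨v⟩
  set 𝓕 : Finset (Finset V) :=
    Finset.univ.filter (fun T => ∑ t ∈ T, x t = gR 𝓑 T) with h𝓕
  have mem𝓕 : ∀ T : Finset V, T ∈ 𝓕 ↔ ∑ t ∈ T, x t = gR 𝓑 T := by
    intro T; simp [h𝓕]
  have huniv𝓕 : Finset.univ ∈ 𝓕 := (mem𝓕 _).2 hxQ.1
  have hempty𝓕 : (∅ : Finset V) ∈ 𝓕 := by
    rw [mem𝓕, Finset.sum_empty, gR_empty 𝓑 hbuild]
  have hcapcup : ∀ T ∈ 𝓕, ∀ U ∈ 𝓕, T ∩ U ∈ 𝓕 ∧ T ∪ U ∈ 𝓕 := by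
    intro T hT U hU
    rw [mem𝓕] at hT hU
    have h1 := hxQ.2 (T ∪ U)
    have h2 := hxQ.2 (T ∩ U)
    have h3 : (∑ t ∈ T ∪ U, x t) + ∑ t ∈ T ∩ U, x t = (∑ t ∈ T, x t) + ∑ t ∈ U, x t :=
      Finset.sum_union_inter
    have h4 := gR_supermodular 𝓑 T U
    constructor
    · rw [mem𝓕]; linarith
    · rw [mem𝓕]; linarith
  -- the minimal tight set containing each point
  have hMex : ∀ s : V, ∃ Ms, (Ms ∈ 𝓕 ∧ s ∈ Ms) ∧ ∀ A ∈ 𝓕, s ∈ A → Ms ⊆ A := by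
    intro s
    obtain ⟨Ms, hMs, hmin⟩ := exists_min (𝓕.filter (s ∈ ·))
      ⟨Finset.univ, by simp [huniv𝓕]⟩
      (by
        intro A hA B hB
        simp only [Finset.mem_filter] at hA hB ⊢
        exact ⟨(hcapcup A hA.1 B hB.1).1, Finset.mem_inter.2 ⟨hA.2, hB.2⟩⟩)
    simp only [Finset.mem_filter] at hMs
    refine ⟨Ms, ⟨hMs.1, hMs.2⟩, fun A hA hs => hmin A ?_⟩
    simp only [Finset.mem_filter]
    exact ⟨hA, hs⟩
  choose M hM1 hM2 using hMex
  -- injectivity of M on extreme points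
  have hMinj : ∀ s t : V, M s = M t → s = t := by
    intro s t hMeq
    by_contra hst
    have hiff : ∀ T ∈ 𝓕, (s ∈ T ↔ t ∈ T) := by
      intro T hT
      constructor
      · intro hs
        have h1 : M s ⊆ T := hM2 s T hT hs
        have h2 : t ∈ M t := (hM1 t).2
        rw [← hMeq] at h2
        exact h1 h2
      · intro ht
        have h1 : M t ⊆ T := hM2 t T hT ht
        have h2 : s ∈ M s := (hM1 s).2
        rw [hMeq] at h2
        exact h1 h2
    set 𝒟 : Finset (Finset V) :=
      Finset.univ.filter (fun T => (s ∈ T ∧ t ∉ T) ∨ (t ∈ T ∧ s ∉ T)) with h𝒟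
    have h𝒟ne : 𝒟.Nonempty := by
      refine ⟨{s}, ?_⟩
      rw [h𝒟, Finset.mem_filter]
      refine ⟨Finset.mem_univ _, Or.inl ⟨Finset.mem_singleton_self s, ?_⟩⟩
      rw [Finset.mem_singleton]
      exact fun h => hst h.symm
    have hslack : ∀ T ∈ 𝒟, 0 < ∑ t' ∈ T, x t' - gR 𝓑 T := by
      intro T hT
      simp only [h𝒟, Finset.mem_filter, Finset.mem_univ, true_and] at hT
      have hT𝓕 : T ∉ 𝓕 := by
        rcases hT with ⟨hsT, htT⟩ | ⟨htT, hsT⟩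
        · exact fun h => htT ((hiff T h).1 hsT)
        · exact fun h => hsT ((hiff T h).2 htT)
      have h1 := hxQ.2 T
      have h2 : ∑ t' ∈ T, x t' ≠ gR 𝓑 T := fun h => hT𝓕 ((mem𝓕 T).2 h)
      have := lt_of_le_of_ne h1 (Ne.symm h2)
      linarith
    set ε : ℝ := 𝒟.inf' h𝒟ne (fun T => ∑ t' ∈ T, x t' - gR 𝓑 T) with hεdef
    have hε : 0 < ε := by
      rw [hεdef, Finset.lt_inf'_iff]
      exact hslack
    have hεle : ∀ T ∈ 𝒟, ε ≤ ∑ t' ∈ T, x t' - gR 𝓑 T := fun T hT =>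
      Finset.inf'_le _ hT
    set d : V → ℝ := fun v => (if v = s then ε else 0) - (if v = t then ε else 0) with hd
    have hsum_d : ∀ T : Finset V,
        ∑ v ∈ T, d v = (if s ∈ T then ε else 0) - (if t ∈ T then ε else 0) := by
      intro T
      rw [hd]
      rw [Finset.sum_sub_distrib]
      congr 1 <;> rw [Finset.sum_ite_eq' T]
    have hmemQ : ∀ c : ℝ, c = 1 ∨ c = -1 → x + c • d ∈ Qset 𝓑 := by
      intro c hc
      have hcabs : c * c = 1 := by rcases hc with rfl | rfl <;> norm_num
      have hc1 : |c| = 1 := by rcases hc with rfl | rfl <;> norm_num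
      constructor
      · have : ∑ v : V, (x + c • d) v = (∑ v : V, x v) + c * ∑ v : V, d v := by
          simp [Finset.sum_add_distrib, Finset.mul_sum]
        rw [this, hsum_d Finset.univ]
        simp only [Finset.mem_univ, if_pos]
        rw [sub_self, mul_zero, add_zero]
        exact hxQ.1
      · intro T
        have hTd : ∑ v ∈ T, (x + c • d) v = (∑ v ∈ T, x v) + c * ∑ v ∈ T, d v := by
          simp [Finset.sum_add_distrib, Finset.mul_sum]
        rw [hTd, hsum_d T]
        by_cases hsT : s ∈ T <;> by_cases htT : t ∈ T
        · rw [if_pos hsT, if_pos htT, sub_self, mul_zero, add_zero]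
          exact hxQ.2 T
        · have hT𝒟 : T ∈ 𝒟 := by
            simp only [h𝒟, Finset.mem_filter, Finset.mem_univ, true_and]
            exact Or.inl ⟨hsT, htT⟩
          have h1 := hεle T hT𝒟
          rw [if_pos hsT, if_neg htT, sub_zero]
          have : -ε ≤ c * ε := by nlinarith [abs_le.1 hc1.le]
          linarith
        · have hT𝒟 : T ∈ 𝒟 := by
            simp only [h𝒟, Finset.mem_filter, Finset.mem_univ, true_and]
            exact Or.inr ⟨htT, hsT⟩
          have h1 := hεle T hT𝒟
          rw [if_neg hsT, if_pos htT, zero_sub]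
          have : -ε ≤ c * (-ε) := by nlinarith [abs_le.1 hc1.le]
          linarith
        · rw [if_neg hsT, if_neg htT, sub_self, mul_zero, add_zero]
          exact hxQ.2 T
    have h1 := hmemQ 1 (Or.inl rfl)
    have h2 := hmemQ (-1) (Or.inr rfl)
    have hseg : x ∈ openSegment ℝ (x + (1:ℝ) • d) (x + (-1:ℝ) • d) := by
      refine ⟨1/2, 1/2, by norm_num, by norm_num, by norm_num, ?_⟩
      funext v
      simp only [Pi.add_apply, Pi.smul_apply, smul_eq_mul, one_smul, neg_one_smul,
        Pi.neg_apply]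
      ring
    obtain ⟨heq1, -⟩ := hext _ h1 _ h2 hseg
    have hds : d s = 0 := by
      have h3 := congrFun heq1 s
      simp only [Pi.add_apply, Pi.smul_apply, one_smul, smul_eq_mul] at h3
      linarith
    have hds2 : d s = ε := by
      simp [hd, hst]
    rw [hds] at hds2
    exact absurd hds2.symm (ne_of_gt hε)
  -- union of tight sets is tight
  have hsup𝓕 : ∀ 𝒜 : Finset (Finset V), (∀ A ∈ 𝒜, A ∈ 𝓕) → 𝒜.sup id ∈ 𝓕 := by
    intro 𝒜
    induction 𝒜 using Finset.induction with
    | empty => intro _; simpa using hempty𝓕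
    | insert A 𝒜' hA ih =>
      intro h
      rw [Finset.sup_insert]
      have h1 : A ∈ 𝓕 := h A (Finset.mem_insert_self _ _)
      have h2 : 𝒜'.sup id ∈ 𝓕 := ih (fun A' hA' => h A' (Finset.mem_insert_of_mem hA'))
      exact (hcapcup A h1 (𝒜'.sup id) h2).2
  -- coordinate formula
  have herase𝓕 : ∀ s : V, (M s).erase s ∈ 𝓕 := by
    intro s
    have hsub : ∀ t ∈ (M s).erase s, M t ⊆ (M s).erase s := by
      intro t ht
      obtain ⟨htne, htM⟩ := Finset.mem_erase.1 ht
      have h1 : M t ⊆ M s := hM2 t (M s) (hM1 s).1 htM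
      intro a ha
      refine Finset.mem_erase.2 ⟨?_, h1 ha⟩
      intro haeq
      subst haeq
      have h2 : M a ⊆ M t := hM2 a (M t) (hM1 t).1 ha
      exact htne (hMinj t a (Finset.Subset.antisymm h1 h2))
    have himg : (((M s).erase s).image M).sup id = (M s).erase s := by
      apply Finset.Subset.antisymm
      · show (((M s).erase s).image M).sup id ≤ (M s).erase s
        apply Finset.sup_le
        intro A hA
        obtain ⟨t, ht, rfl⟩ := Finset.mem_image.1 hA
        exact hsub t ht
      · intro a ha
        have h1 : M a ≤ (((M s).erase s).image M).sup id :=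
          Finset.le_sup (f := id) (Finset.mem_image_of_mem M ha)
        exact h1 (hM1 a).2
    have hall : ∀ A ∈ ((M s).erase s).image M, A ∈ 𝓕 := by
      intro A hA
      obtain ⟨t, -, rfl⟩ := Finset.mem_image.1 hA
      exact (hM1 t).1
    have h2 := hsup𝓕 _ hall
    rwa [himg] at h2
  have hcoord : ∀ s : V,
      x s = ∑ B ∈ 𝓑.filter (fun B => s ∈ B ∧ B ⊆ M s),
        (ybar (𝓑 : Set (Finset V)) B : ℝ) := by
    intro s
    have h1 : ∑ t ∈ M s, x t = gR 𝓑 (M s) := (mem𝓕 _).1 (hM1 s).1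
    have h2 : ∑ t ∈ (M s).erase s, x t = gR 𝓑 ((M s).erase s) :=
      (mem𝓕 _).1 (herase𝓕 s)
    have h3 : (∑ t ∈ (M s).erase s, x t) + x s = ∑ t ∈ M s, x t :=
      Finset.sum_erase_add _ _ (hM1 s).2
    have h4 : x s = gR 𝓑 (M s) - gR 𝓑 ((M s).erase s) := by linarith
    rw [h4, gR, gR, Finset.sum_filter, Finset.sum_filter, ← Finset.sum_sub_distrib,
      Finset.sum_filter]
    refine Finset.sum_congr rfl (fun B _ => ?_)
    by_cases hsB : s ∈ B <;> by_cases hBM : B ⊆ M s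
    · have hsubM : ¬ B ⊆ (M s).erase s := fun h =>
        (Finset.mem_erase.1 (h hsB)).1 rfl
      rw [if_pos hBM, if_neg hsubM, if_pos ⟨hsB, hBM⟩, sub_zero]
    · have hsubM : ¬ B ⊆ (M s).erase s := fun h =>
        hBM (h.trans (Finset.erase_subset _ _))
      rw [if_neg hBM, if_neg hsubM, if_neg (fun h => hBM h.2), sub_zero]
    · have hsubM : B ⊆ (M s).erase s := Finset.subset_erase.2 ⟨hBM, hsB⟩
      rw [if_pos hBM, if_pos hsubM, if_neg (fun h => hsB h.1), sub_self]
    · have hsubM : ¬ B ⊆ (M s).erase s := fun h =>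
        hBM (h.trans (Finset.erase_subset _ _))
      rw [if_neg hBM, if_neg hsubM, if_neg (fun h => hBM h.2), sub_self]
  -- uniqueness of the tagged element
  have huniq : ∀ B : Finset V, ∀ s t : V, s ∈ B → B ⊆ M s → t ∈ B → B ⊆ M t → s = t := by
    intro B s t hsB hBs htB hBt
    have h1 : M s ⊆ M t := hM2 s (M t) (hM1 t).1 (hBt hsB)
    have h2 : M t ⊆ M s := hM2 t (M s) (hM1 s).1 (hBs htB)
    exact hMinj s t (Finset.Subset.antisymm h1 h2)
  -- existence of the tagged element when ybar is positive
  set c : Finset V → ℕ :=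
    fun B => (Finset.univ.filter (fun s => s ∈ B ∧ B ⊆ M s)).card with hc
  have hcle : ∀ B : Finset V, c B ≤ 1 := by
    intro B
    rw [hc]
    refine Finset.card_le_one.2 (fun a ha b hb => ?_)
    simp only [Finset.mem_filter, Finset.mem_univ, true_and] at ha hb
    exact huniq B a b ha.1 ha.2 hb.1 hb.2
  have htot : ∑ B ∈ 𝓑, (ybar (𝓑 : Set (Finset V)) B : ℝ) * c B
      = ∑ B ∈ 𝓑, (ybar (𝓑 : Set (Finset V)) B : ℝ) := by
    have hL : ∑ v : V, x v = ∑ B ∈ 𝓑, (ybar (𝓑 : Set (Finset V)) B : ℝ) * c B := by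
      have : ∀ v : V, x v = ∑ B ∈ 𝓑,
          (if v ∈ B ∧ B ⊆ M v then (ybar (𝓑 : Set (Finset V)) B : ℝ) else 0) := by
        intro v
        rw [hcoord v, Finset.sum_filter]
      rw [Finset.sum_congr rfl (fun v _ => this v), Finset.sum_comm]
      refine Finset.sum_congr rfl (fun B _ => ?_)
      rw [← Finset.sum_filter, Finset.sum_const, hc, nsmul_eq_mul, mul_comm]
    have hR : ∑ v : V, x v = ∑ B ∈ 𝓑, (ybar (𝓑 : Set (Finset V)) B : ℝ) := by
      rw [hxQ.1, gR, Finset.filter_true_of_mem (fun B _ => Finset.subset_univ B)]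
    rw [← hL, hR]
  have hterm : ∀ B ∈ 𝓑, (ybar (𝓑 : Set (Finset V)) B : ℝ) * c B
      = (ybar (𝓑 : Set (Finset V)) B : ℝ) := by
    have hle : ∀ B ∈ 𝓑, (ybar (𝓑 : Set (Finset V)) B : ℝ) * c B
        ≤ (ybar (𝓑 : Set (Finset V)) B : ℝ) := by
      intro B _
      have := hcle B
      calc (ybar (𝓑 : Set (Finset V)) B : ℝ) * c B
          ≤ (ybar (𝓑 : Set (Finset V)) B : ℝ) * 1 := by
            apply mul_le_mul_of_nonneg_left _ (Nat.cast_nonneg _)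
            exact_mod_cast this
        _ = _ := mul_one _
    exact fun B hB => (Finset.sum_eq_sum_iff_of_le hle).1 htot B hB
  have hexist : ∀ B ∈ 𝓑, ybar (𝓑 : Set (Finset V)) B ≠ 0 →
      ∃ s, s ∈ B ∧ B ⊆ M s := by
    intro B hB hy
    have h1 := hterm B hB
    have h2 : (c B : ℝ) = 1 := by
      have hy' : (ybar (𝓑 : Set (Finset V)) B : ℝ) ≠ 0 := Nat.cast_ne_zero.2 hy
      exact mul_left_cancel₀ hy' (h1.trans (mul_one _).symm)
    have h3 : c B = 1 := by exact_mod_cast h2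
    have h4 : 0 < c B := by omega
    obtain ⟨a, ha⟩ := Finset.card_pos.1 h4
    simp only [Finset.mem_filter, Finset.mem_univ, true_and] at ha
    exact ⟨a, ha⟩
  -- construct the decomposition
  set σ : Finset V → V := fun B =>
    if h : ∃ s, s ∈ B ∧ B ⊆ M s then h.choose else Classical.arbitrary V with hσ
  set f : Finset V → (V → ℝ) := fun B =>
    (ybar (𝓑 : Set (Finset V)) B : ℝ) • (Pi.single (σ B) 1 : V → ℝ) with hf
  have hfmem : ∀ B ∈ 𝓑, f B ∈ (ybar (𝓑 : Set (Finset V)) B : ℝ) • simplexFace B := by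
    intro B hB
    by_cases hy : ybar (𝓑 : Set (Finset V)) B = 0
    · have hzero : f B = 0 := by
        rw [hf]; simp only [hy, Nat.cast_zero, zero_smul]
      have hne : (simplexFace B : Set (V → ℝ)).Nonempty := by
        obtain ⟨t, ht⟩ := hbuild.1 B (by exact_mod_cast hB)
        exact ⟨_, single_mem_simplexFace ht⟩
      rw [hzero, hy, Nat.cast_zero, Set.zero_smul_set hne]
      rfl
    · have hex := hexist B hB hy
      have hσB : σ B ∈ B ∧ B ⊆ M (σ B) := by
        rw [hσ]
        simp only [dif_pos hex]
        exact hex.choose_spec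
      exact Set.smul_mem_smul_set (single_mem_simplexFace hσB.1)
  have hxeq : x = ∑ B ∈ 𝓑, f B := by
    funext v
    rw [Finset.sum_apply, hcoord v, Finset.sum_filter]
    refine Finset.sum_congr rfl (fun B hB => ?_)
    rw [hf]
    simp only [Pi.smul_apply, smul_eq_mul, Pi.single_apply]
    by_cases hy : ybar (𝓑 : Set (Finset V)) B = 0
    · simp [hy]
    · have hex := hexist B hB hy
      have hσB : σ B ∈ B ∧ B ⊆ M (σ B) := by
        rw [hσ]
        simp only [dif_pos hex]
        exact hex.choose_spec
      by_cases hv : v ∈ B ∧ B ⊆ M v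
      · have : v = σ B := huniq B v (σ B) hv.1 hv.2 hσB.1 hσB.2
        rw [if_pos hv, if_pos this, mul_one]
      · have : v ≠ σ B := fun h => hv (h ▸ hσB)
        rw [if_neg hv, if_neg this, mul_zero]
  rw [hxeq]
  exact Set.finset_sum_mem_finset_sum 𝓑 _ f hfmem

omit hbuild hconn hclosed in
lemma simplexFace_isCompact (B : Finset V) : IsCompact (simplexFace B) := by
  have hfin : ({x : V → ℝ | ∃ t ∈ B, x = Pi.single t 1}).Finite := by
    have : {x : V → ℝ | ∃ t ∈ B, x = Pi.single t 1}
        = (fun t => (Pi.single t 1 : V → ℝ)) '' ↑B := by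
      ext x
      simp [Set.mem_image, eq_comm]
    rw [this]
    exact (B.finite_toSet).image _
  exact hfin.isCompact_convexHull ℝ

omit hbuild hconn hclosed in
lemma sum_isCompact (𝓣 : Finset (Finset V)) (y : Finset V → ℝ) :
    IsCompact (∑ B ∈ 𝓣, y B • simplexFace B) := by
  classical
  induction 𝓣 using Finset.induction with
  | empty =>
    rw [Finset.sum_empty]
    have : (0 : Set (V → ℝ)) = {0} := rfl
    rw [this]
    exact isCompact_singleton
  | insert A 𝒜' hA ih =>
    rw [Finset.sum_insert hA]
    exact ((simplexFace_isCompact _).smul _).add ih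

omit hbuild hconn hclosed in
lemma sum_convex (𝓣 : Finset (Finset V)) (y : Finset V → ℝ) :
    Convex ℝ (∑ B ∈ 𝓣, y B • simplexFace B) := by
  classical
  induction 𝓣 using Finset.induction with
  | empty =>
    rw [Finset.sum_empty]
    have : (0 : Set (V → ℝ)) = {0} := rfl
    rw [this]
    exact convex_singleton 0
  | insert A 𝒜' hA ih =>
    rw [Finset.sum_insert hA]
    exact ((convex_convexHull ℝ _).smul _).add ih

include hbuild hconn hclosed in
lemma Q_subset_sum :
    Qset 𝓑 ⊆ ∑ B ∈ 𝓑, (ybar (𝓑 : Set (Finset V)) B : ℝ) • simplexFace B := by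
  have hKM := closure_convexHull_extremePoints (Q_isCompact 𝓑) (Q_convex 𝓑)
  have h1 : convexHull ℝ ((Qset 𝓑).extremePoints ℝ)
      ⊆ ∑ B ∈ 𝓑, (ybar (𝓑 : Set (Finset V)) B : ℝ) • simplexFace B :=
    convexHull_min (extremePoints_subset_sum 𝓑 hbuild hconn hclosed) (sum_convex 𝓑 (fun B => (ybar (𝓑 : Set (Finset V)) B : ℝ)))
  calc Qset 𝓑 = closure (convexHull ℝ ((Qset 𝓑).extremePoints ℝ)) := hKM.symm
    _ ⊆ closure (∑ B ∈ 𝓑, (ybar (𝓑 : Set (Finset V)) B : ℝ) • simplexFace B) :=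
        closure_mono h1
    _ = ∑ B ∈ 𝓑, (ybar (𝓑 : Set (Finset V)) B : ℝ) • simplexFace B :=
        (sum_isCompact 𝓑 (fun B => (ybar (𝓑 : Set (Finset V)) B : ℝ))).isClosed.closure_eq

end incl

end RemoAux


/-- For a connected building set `𝓑` closed under intersection, the
removahedron `Remo(𝓑)` coincides with the Minkowski sum `Σ_{B ∈ 𝓑} ȳ_B Δ_B`
of dilated faces of the standard simplex. -/
theorem remo_eq_minkowski_sum {V : Type*} [Fintype V] [DecidableEq V]
    (𝓑 : Finset (Finset V)) (hbuild : IsBuilding (𝓑 : Set (Finset V)))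
    (hconn : (Finset.univ : Finset V) ∈ 𝓑)
    (hclosed : ∀ B ∈ 𝓑, ∀ B' ∈ 𝓑, (B ∩ B').Nonempty → B ∩ B' ∈ 𝓑) :
    Remo (𝓑 : Set (Finset V)) =
      ∑ B ∈ 𝓑, (ybar (𝓑 : Set (Finset V)) B : ℝ) • simplexFace B := by
  apply Set.Subset.antisymm
  · exact (RemoAux.remo_subset_Q 𝓑 hbuild hconn hclosed).trans
      (RemoAux.Q_subset_sum 𝓑 hbuild hconn hclosed)
  · exact RemoAux.sum_faces_subset_remo 𝓑 hbuild hconn hclosed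
end

section
/- Let G be a finite connected chordful simple graph with vertex set S. Then the removahedron Remo(𝓑(G)) equals the Minkowski sum Σ_P Δ_P over all vertex sets P of induced paths of G (including the singletons as trivial paths), each taken with coefficient 1, as an equality of subsets of ℝ^S. -/
open Pointwise

/-- The graphical building set of a graph `G`: all nonempty subsets of vertices
inducing a connected subgraph of `G`. -/
def graphBuilding {V : Type*} (G : SimpleGraph V) : Set (Finset V) :=
  {B | B.Nonempty ∧ (G.induce (B : Set V)).Connected}

/-- `P` is the vertex set of an induced path of `G` from `s` to `t`: a path
such that the only edges of `G` between its vertices are the consecutive edges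
of the path (a single vertex is the trivial induced path from `s` to `s`). -/
def IsInducedPathSet {V : Type*} [DecidableEq V] (G : SimpleGraph V)
    (s t : V) (P : Finset V) : Prop :=
  ∃ p : G.Walk s t, p.IsPath ∧
    (∀ u v : V, u ∈ p.support → v ∈ p.support → G.Adj u v →
      s(u, v) ∈ p.edges) ∧
    P = p.support.toFinset

namespace RemoProofAux

set_option linter.unusedSectionVars false
set_option linter.unreachableTactic false
set_option linter.unusedTactic false

open SimpleGraph Walk Finset
open scoped Classical

variable {V : Type*} [DecidableEq V] {G : SimpleGraph V}

/-- Chordfulness hypothesis, packaged. -/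
def Chordful (G : SimpleGraph V) : Prop :=
  ∀ (v : V) (c : G.Walk v v), c.IsCycle → G.IsClique {x | x ∈ c.support}

/-- A walk is induced if the only edges of `G` between its support vertices
are its own edges. -/
def Induced {s t : V} (p : G.Walk s t) : Prop :=
  ∀ u v : V, u ∈ p.support → v ∈ p.support → G.Adj u v → s(u, v) ∈ p.edges

lemma isInducedPathSet_iff {s t : V} {P : Finset V} :
    IsInducedPathSet G s t P ↔
      ∃ p : G.Walk s t, p.IsPath ∧ Induced p ∧ P = p.support.toFinset :=
  Iff.rfl

lemma Induced.reverse {s t : V} {p : G.Walk s t} (hp : Induced p) :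
    Induced p.reverse := by
  intro u v hu hv huv
  rw [Walk.support_reverse, List.mem_reverse] at hu hv
  rw [Walk.edges_reverse, List.mem_reverse]
  exact hp u v hu hv huv

lemma isInducedPathSet_symm {s t : V} {P : Finset V}
    (h : IsInducedPathSet G s t P) : IsInducedPathSet G t s P := by
  obtain ⟨p, hp, hi, rfl⟩ := h
  exact ⟨p.reverse, hp.reverse, Induced.reverse hi, by
    rw [Walk.support_reverse, List.toFinset_reverse]⟩

lemma Induced.of_cons {s v t : V} {h : G.Adj s v} {q : G.Walk v t}
    (hp : (Walk.cons h q).IsPath) (hi : Induced (Walk.cons h q)) :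
    Induced q := by
  intro u u' hu hu' huv
  have hm := hi u u' (by simp [hu]) (by simp [hu']) huv
  rw [Walk.edges_cons, List.mem_cons] at hm
  rcases hm with he | he
  · exfalso
    have hs : s ∉ q.support := ((Walk.cons_isPath_iff h q).mp hp).2
    rw [Sym2.eq_iff] at he
    rcases he with ⟨rfl, _⟩ | ⟨_, rfl⟩
    · exact hs hu
    · exact hs hu'
  · exact he

lemma eq_of_mem_take_drop {s t u : V} {p : G.Walk s t} (hp : p.IsPath)
    (h : u ∈ p.support) {x : V} (hx1 : x ∈ (p.takeUntil u h).support)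
    (hx2 : x ∈ (p.dropUntil u h).support) : x = u := by
  have hnd : p.support.Nodup := hp.support_nodup
  rw [← p.take_spec h, Walk.support_append, List.nodup_append'] at hnd
  rcases (p.dropUntil u h).mem_support_iff.mp hx2 with rfl | hx2'
  · rfl
  · exact absurd hx2' (hnd.2.2 hx1)

lemma Induced.takeUntil {s t u : V} {p : G.Walk s t} (hp : p.IsPath)
    (hi : Induced p) (h : u ∈ p.support) : Induced (p.takeUntil u h) := by
  intro a b ha hb hab
  have he := hi a b (p.support_takeUntil_subset h ha)
    (p.support_takeUntil_subset h hb) hab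
  rw [← p.take_spec h, Walk.edges_append, List.mem_append] at he
  rcases he with he | he
  · exact he
  · exfalso
    have ha' := eq_of_mem_take_drop hp h ha
      (Walk.fst_mem_support_of_mem_edges _ he)
    have hb' := eq_of_mem_take_drop hp h hb
      (Walk.snd_mem_support_of_mem_edges _ he)
    exact hab.ne (ha'.trans hb'.symm)

lemma Induced.dropUntil {s t u : V} {p : G.Walk s t} (hp : p.IsPath)
    (hi : Induced p) (h : u ∈ p.support) : Induced (p.dropUntil u h) := by
  intro a b ha hb hab
  have he := hi a b (p.support_dropUntil_subset h ha)
    (p.support_dropUntil_subset h hb) hab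
  rw [← p.take_spec h, Walk.edges_append, List.mem_append] at he
  rcases he with he | he
  · exfalso
    have ha' := eq_of_mem_take_drop hp h
      (Walk.fst_mem_support_of_mem_edges _ he) ha
    have hb' := eq_of_mem_take_drop hp h
      (Walk.snd_mem_support_of_mem_edges _ he) hb
    exact hab.ne (ha'.trans hb'.symm)
  · exact he

/-- In an induced path, the only neighbor of the start vertex inside the
support is the second vertex. -/
lemma adj_start_eq {s v t : V} {h : G.Adj s v} {q : G.Walk v t}
    (hp : (Walk.cons h q).IsPath) (hi : Induced (Walk.cons h q)) {u : V}
    (hu : u ∈ (Walk.cons h q).support) (ha : G.Adj s u) : u = v := by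
  have he := hi s u (Walk.start_mem_support _) hu ha
  rw [Walk.edges_cons, List.mem_cons] at he
  rcases he with he | he
  · rw [Sym2.eq_iff] at he
    rcases he with ⟨-, rfl⟩ | ⟨-, rfl⟩
    · rfl
    · exact absurd ha (G.loopless.irrefl _)
  · exact absurd (Walk.fst_mem_support_of_mem_edges _ he)
      ((Walk.cons_isPath_iff h q).mp hp).2

/-- If the endpoints of an induced path are adjacent, it has length 1. -/
lemma induced_length_one_of_adj {s t : V} {p : G.Walk s t} (hp : p.IsPath)
    (hi : Induced p) (hst : s ≠ t) (hadj : G.Adj s t) : p.length = 1 := by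
  cases p with
  | nil => exact absurd rfl hst
  | cons h q =>
    have h2 := adj_start_eq hp hi (Walk.end_mem_support _) hadj
    subst h2
    have : q = Walk.nil := (Walk.isPath_iff_eq_nil (p := q)).mp ((Walk.cons_isPath_iff _ _).mp hp).1
    subst this
    rfl

/-- An edge of `G` between two support vertices of an induced path whose
endpoint set is `{s, t}` forces `s` adjacent to `t`; conversely membership of
both endpoints of an edge. Helper: an edge in a walk of length 1. -/
lemma edge_mem_of_length_one {u v : V} (r : G.Walk u v) (h : r.length = 1) :
    s(u, v) ∈ r.edges := by
  cases r with
  | nil => simp at h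
  | cons hadj r' =>
    rw [Walk.length_cons, Nat.add_eq_right] at h
    have := Walk.eq_of_length_eq_zero h
    subst this
    simp

/-- Uniqueness of induced paths in chordful graphs. -/
lemma induced_path_unique (hch : Chordful G) :
    ∀ (n : ℕ) {s t : V} (p q : G.Walk s t), p.IsPath → Induced p →
      q.IsPath → Induced q → p.length + q.length ≤ n → p = q := by
  intro n
  induction n with
  | zero =>
    intro s t p q hp hip hq hiq hlen
    have hp0 : p.length = 0 := by omega
    have hq0 : q.length = 0 := by omega
    have hst := Walk.eq_of_length_eq_zero hp0
    subst hst
    rw [Walk.length_eq_zero_iff, Walk.nil_iff_eq_nil] at hp0 hq0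
    rw [hp0, hq0]
  | succ n ih =>
    intro s t p q hp hip hq hiq hlen
    by_cases hst : s = t
    · subst hst
      rw [(Walk.isPath_iff_eq_nil (p := p)).mp hp, (Walk.isPath_iff_eq_nil (p := q)).mp hq]
    by_cases hshare : ∃ x, x ∈ p.support ∧ x ∈ q.support ∧ x ≠ s ∧ x ≠ t
    · obtain ⟨x, hxp, hxq, hxs, hxt⟩ := hshare
      have hlen1 : ∀ {a b : V} (r : G.Walk a b), a ≠ b → 1 ≤ r.length := by
        intro a b r hab
        rcases Nat.eq_zero_or_pos r.length with h0 | h1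
        · exact absurd (Walk.eq_of_length_eq_zero h0) hab
        · exact h1
      have hpt1 := hlen1 (p.takeUntil x hxp) (Ne.symm hxs)
      have hpd1 := hlen1 (p.dropUntil x hxp) hxt
      have hqt1 := hlen1 (q.takeUntil x hxq) (Ne.symm hxs)
      have hqd1 := hlen1 (q.dropUntil x hxq) hxt
      have hplen : (p.takeUntil x hxp).length + (p.dropUntil x hxp).length
          = p.length := by
        conv_rhs => rw [← p.take_spec hxp]
        rw [Walk.length_append]
      have hqlen : (q.takeUntil x hxq).length + (q.dropUntil x hxq).length
          = q.length := by
        conv_rhs => rw [← q.take_spec hxq]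
        rw [Walk.length_append]
      have h1 : p.takeUntil x hxp = q.takeUntil x hxq :=
        ih _ _ (hp.takeUntil hxp) (Induced.takeUntil hp hip hxp)
          (hq.takeUntil hxq) (Induced.takeUntil hq hiq hxq) (by omega)
      have h2 : p.dropUntil x hxp = q.dropUntil x hxq :=
        ih _ _ (hp.dropUntil hxp) (Induced.dropUntil hp hip hxp)
          (hq.dropUntil hxq) (Induced.dropUntil hq hiq hxq) (by omega)
      rw [← p.take_spec hxp, ← q.take_spec hxq, h1, h2]
    · push_neg at hshare
      have hshare' : ∀ x, x ∈ p.support → x ∈ q.support → x = s ∨ x = t := by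
        intro x h1 h2
        by_cases hx : x = s
        · exact Or.inl hx
        · exact Or.inr (hshare x h1 h2 hx)
      by_cases hadj : G.Adj s t
      · have hp1 := induced_length_one_of_adj hp hip hst hadj
        have hq1 := induced_length_one_of_adj hq hiq hst hadj
        cases p with
        | nil => simp at hp1
        | cons h p' =>
          rw [Walk.length_cons] at hp1
          have hv := Walk.eq_of_length_eq_zero (by omega : p'.length = 0)
          subst hv
          have hp'nil : p' = Walk.nil :=
            Walk.nil_iff_eq_nil.mp (Walk.length_eq_zero_iff.mp (by omega))
          subst hp'nil
          cases q with
          | nil => simp at hq1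
          | cons h' q' =>
            rw [Walk.length_cons] at hq1
            have hv' := Walk.eq_of_length_eq_zero (by omega : q'.length = 0)
            subst hv'
            have hq'nil : q' = Walk.nil :=
              Walk.nil_iff_eq_nil.mp (Walk.length_eq_zero_iff.mp (by omega))
            subst hq'nil
            rfl
      · exfalso
        have hp1 : 1 ≤ p.length := by
          rcases Nat.eq_zero_or_pos p.length with h0 | h1
          · exact absurd (Walk.eq_of_length_eq_zero h0) hst
          · exact h1
        set c : G.Walk s s := p.append q.reverse with hc
        have hcyc : c.IsCycle := by
          rw [Walk.isCycle_def]
          refine ⟨?_, ?_, ?_⟩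
          · rw [Walk.isTrail_def, hc, Walk.edges_append, Walk.edges_reverse,
              List.nodup_append']
            refine ⟨hp.isTrail.edges_nodup,
              List.nodup_reverse.mpr hq.isTrail.edges_nodup, ?_⟩
            intro e hep heq
            rw [List.mem_reverse] at heq
            induction e using Sym2.ind with
            | _ a b =>
              have hab : G.Adj a b := p.adj_of_mem_edges hep
              have ha := hshare' a (Walk.fst_mem_support_of_mem_edges _ hep)
                (Walk.fst_mem_support_of_mem_edges _ heq)
              have hb := hshare' b (Walk.snd_mem_support_of_mem_edges _ hep)
                (Walk.snd_mem_support_of_mem_edges _ heq)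
              rcases ha with rfl | rfl <;> rcases hb with rfl | rfl
              · exact hab.ne rfl
              · exact hadj hab
              · exact hadj hab.symm
              · exact hab.ne rfl
          · intro hnil
            have h0 : c.length = 0 := by rw [hnil]; rfl
            rw [hc, Walk.length_append] at h0
            omega
          · have htail : c.support.tail
                = p.support.tail ++ q.reverse.support.tail := by
              rw [hc, Walk.support_append]
              conv_lhs => rw [Walk.support_eq_cons p]
              rw [List.cons_append, List.tail_cons]
            rw [htail, List.nodup_append']
            have hpnd := hp.support_nodup
            rw [Walk.support_eq_cons p, List.nodup_cons] at hpnd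
            have hqnd := hq.reverse.support_nodup
            rw [Walk.support_eq_cons q.reverse, List.nodup_cons] at hqnd
            refine ⟨hpnd.2, hqnd.2, ?_⟩
            intro y hy1 hy2
            have hyp : y ∈ p.support := List.mem_of_mem_tail hy1
            have hyq : y ∈ q.support := by
              have : y ∈ q.reverse.support := List.mem_of_mem_tail hy2
              rwa [Walk.support_reverse, List.mem_reverse] at this
            rcases hshare' y hyp hyq with rfl | rfl
            · exact hpnd.1 hy1
            · exact hqnd.1 hy2
        have hclique := hch s c hcyc
        have hsm : s ∈ c.support := c.start_mem_support
        have htm : t ∈ c.support := by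
          rw [hc, Walk.support_append]
          exact List.mem_append_left _ p.end_mem_support
        exact hadj (hclique hsm htm hst)

lemma pathset_unique (hch : Chordful G) {s t : V} {P P' : Finset V}
    (h : IsInducedPathSet G s t P) (h' : IsInducedPathSet G s t P') :
    P = P' := by
  obtain ⟨p, hp, hi, rfl⟩ := h
  obtain ⟨q, hq, hqi, rfl⟩ := h'
  rw [induced_path_unique hch (p.length + q.length) p q hp hi hq hqi le_rfl]

lemma pathset_unique' (hch : Chordful G) {a b a' b' : V} {P P' : Finset V}
    (h1 : IsInducedPathSet G a b P) (h2 : IsInducedPathSet G a' b' P')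
    (he : s(a, b) = s(a', b')) : P = P' := by
  rw [Sym2.eq_iff] at he
  rcases he with ⟨rfl, rfl⟩ | ⟨rfl, rfl⟩
  · exact pathset_unique hch h1 h2
  · exact pathset_unique hch h1 (isInducedPathSet_symm h2)

/-- number of neighbors of `u` inside `P`. -/
noncomputable def nbr (G : SimpleGraph V) (P : Finset V) (u : V) : Finset V :=
  P.filter (fun v => G.Adj u v)

lemma nbr_start {s v t : V} {h : G.Adj s v} {q : G.Walk v t}
    (hp : (Walk.cons h q).IsPath) (hi : Induced (Walk.cons h q)) :
    nbr G (Walk.cons h q).support.toFinset s = {v} := by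
  ext u
  simp only [nbr, Finset.mem_filter, Finset.mem_singleton, List.mem_toFinset]
  constructor
  · rintro ⟨hu, ha⟩
    exact adj_start_eq hp hi hu ha
  · rintro rfl
    exact ⟨by simp [q.start_mem_support], h⟩

lemma nbr_start' {s t : V} (p : G.Walk s t) (hp : p.IsPath)
    (hi : Induced p) (h0 : p.length ≠ 0) :
    (nbr G p.support.toFinset s).card = 1 := by
  cases p with
  | nil => simp at h0
  | cons h q => rw [nbr_start hp hi]; simp

lemma nbr_end {s t : V} (p : G.Walk s t) (hp : p.IsPath)
    (hi : Induced p) (h0 : p.length ≠ 0) :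
    (nbr G p.support.toFinset t).card = 1 := by
  have := nbr_start' p.reverse hp.reverse (Induced.reverse hi)
    (by rwa [Walk.length_reverse])
  rwa [Walk.support_reverse, List.toFinset_reverse] at this

lemma nbr_internal : ∀ {s t : V} (p : G.Walk s t), p.IsPath → Induced p →
    ∀ {u : V}, u ∈ p.support → u ≠ s → u ≠ t →
      (nbr G p.support.toFinset u).card = 2 := by
  intro s t p
  induction p with
  | nil =>
    intro _ _ u hu hus _
    rw [Walk.support_nil, List.mem_singleton] at hu
    exact absurd hu hus
  | @cons s v t h q ih =>
    intro hp hi u hu hus hut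
    have hqp : q.IsPath := ((Walk.cons_isPath_iff h q).mp hp).1
    have hsq : s ∉ q.support := ((Walk.cons_isPath_iff h q).mp hp).2
    have hqi : Induced q := Induced.of_cons hp hi
    have huq : u ∈ q.support := by
      rw [Walk.support_cons, List.mem_cons] at hu
      exact hu.resolve_left hus
    by_cases huv : u = v
    · subst huv
      have hq0 : q.length ≠ 0 := fun h0 =>
        hut (Walk.eq_of_length_eq_zero h0)
      have hset : nbr G (Walk.cons h q).support.toFinset u
          = insert s (nbr G q.support.toFinset u) := by
        ext x
        simp only [nbr, Finset.mem_filter, Finset.mem_insert,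
          List.mem_toFinset, Walk.support_cons, List.mem_cons]
        constructor
        · rintro ⟨rfl | hx, hax⟩
          · exact Or.inl rfl
          · exact Or.inr ⟨hx, hax⟩
        · rintro (rfl | ⟨hx, hax⟩)
          · exact ⟨Or.inl rfl, h.symm⟩
          · exact ⟨Or.inr hx, hax⟩
      rw [hset, Finset.card_insert_of_notMem, nbr_start' q hqp hqi hq0]
      intro hmem
      exact hsq (by simpa [nbr] using (Finset.mem_filter.mp hmem).1)
    · have hset : nbr G (Walk.cons h q).support.toFinset u
          = nbr G q.support.toFinset u := by
        ext x
        simp only [nbr, Finset.mem_filter, List.mem_toFinset,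
          Walk.support_cons, List.mem_cons]
        constructor
        · rintro ⟨rfl | hx, hax⟩
          · exact absurd (adj_start_eq hp hi (by simp [huq]) hax.symm) huv
          · exact ⟨hx, hax⟩
        · rintro ⟨hx, hax⟩
          exact ⟨Or.inr hx, hax⟩
      rw [hset]
      exact ih hqp hqi huq huv hut

/-- the endpoints of an induced path are recoverable from its support. -/
lemma endpoints_eq {s t s' t' : V} {P : Finset V}
    (h1 : IsInducedPathSet G s t P) (h2 : IsInducedPathSet G s' t' P) :
    s(s, t) = s(s', t') := by
  obtain ⟨p, hp, hip, hP⟩ := h1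
  obtain ⟨q, hq, hiq, hQ⟩ := h2
  have hip : Induced p := hip
  have hiq : Induced q := hiq
  have hcardp : P.card = p.length + 1 := by
    rw [hP, List.toFinset_card_of_nodup hp.support_nodup,
      Walk.length_support]
  have hcardq : P.card = q.length + 1 := by
    rw [hQ, List.toFinset_card_of_nodup hq.support_nodup,
      Walk.length_support]
  by_cases hp0 : p.length = 0
  · have hst : s = t := Walk.eq_of_length_eq_zero hp0
    have hq0 : q.length = 0 := by omega
    have hst' : s' = t' := Walk.eq_of_length_eq_zero hq0
    have hs'P : s' ∈ P := by rw [hQ]; simp [q.start_mem_support]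
    have : s' = s := by
      rw [hP] at hs'P
      cases p with
      | nil =>
        rw [Walk.support_nil] at hs'P
        simpa using hs'P
      | cons h r => simp [Walk.length_cons] at hp0
    rw [← hst, ← hst', this]
  · have hq0 : q.length ≠ 0 := by omega
    have keyp : ∀ u, (u ∈ P ∧ (nbr G P u).card = 1) ↔ (u = s ∨ u = t) := by
      intro u
      constructor
      · rintro ⟨huP, hc1⟩
        by_contra hcon
        push_neg at hcon
        have := nbr_internal p hp hip (by rwa [hP, List.mem_toFinset] at huP)
          hcon.1 hcon.2
        rw [← hP] at this
        omega
      · rintro (rfl | rfl)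
        · exact ⟨by rw [hP]; simp [p.start_mem_support],
            by rw [hP]; exact nbr_start' p hp hip hp0⟩
        · exact ⟨by rw [hP]; simp [p.end_mem_support],
            by rw [hP]; exact nbr_end p hp hip hp0⟩
    have keyq : ∀ u, (u ∈ P ∧ (nbr G P u).card = 1) ↔ (u = s' ∨ u = t') := by
      intro u
      constructor
      · rintro ⟨huP, hc1⟩
        by_contra hcon
        push_neg at hcon
        have := nbr_internal q hq hiq (by rwa [hQ, List.mem_toFinset] at huP)
          hcon.1 hcon.2
        rw [← hQ] at this
        omega
      · rintro (rfl | rfl)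
        · exact ⟨by rw [hQ]; simp [q.start_mem_support],
            by rw [hQ]; exact nbr_start' q hq hiq hq0⟩
        · exact ⟨by rw [hQ]; simp [q.end_mem_support],
            by rw [hQ]; exact nbr_end q hq hiq hq0⟩
    have hs' := (keyp s').mp ((keyq s').mpr (Or.inl rfl))
    have ht' := (keyp t').mp ((keyq t').mpr (Or.inr rfl))
    have hs := (keyq s).mp ((keyp s).mpr (Or.inl rfl))
    have ht := (keyq t).mp ((keyp t).mpr (Or.inr rfl))
    rw [Sym2.eq_iff]
    rcases hs' with rfl | rfl <;> rcases ht' with rfl | rfl <;>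
      rcases hs with h1 | h1 <;> rcases ht with h2 | h2 <;>
        first
          | exact Or.inl ⟨rfl, rfl⟩
          | exact Or.inr ⟨rfl, rfl⟩
          | exact Or.inl ⟨rfl, h2⟩
          | exact Or.inl ⟨rfl, h2.symm⟩
          | exact Or.inl ⟨h1, rfl⟩
          | exact Or.inl ⟨h1.symm, rfl⟩
          | exact Or.inr ⟨h2, h1⟩
          | exact Or.inr ⟨h2.symm, h1.symm⟩
          | exact Or.inl ⟨h1, h2⟩
          | exact Or.inl ⟨h1.symm, h2.symm⟩
          | (subst h1; exact Or.inl ⟨rfl, rfl⟩)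
          | (subst h2; exact Or.inl ⟨rfl, rfl⟩)
          | (subst h1; exact Or.inr ⟨rfl, rfl⟩)
          | (subst h2; exact Or.inr ⟨rfl, rfl⟩)

/-- Existence of induced paths inside a vertex subset connecting two
vertices joined by a walk inside that subset. -/
lemma exists_induced_pathset_subset {A : Finset V} {s t : V}
    (h : ∃ p : G.Walk s t, ∀ x ∈ p.support, x ∈ A) :
    ∃ P : Finset V, IsInducedPathSet G s t P ∧ P ⊆ A := by
  classical
  let S : Set ℕ := {n | ∃ p : G.Walk s t, p.length = n ∧ ∀ x ∈ p.support, x ∈ A}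
  have hS : S.Nonempty := by
    obtain ⟨p, hp⟩ := h
    exact ⟨p.length, p, rfl, hp⟩
  let n₀ := sInf S
  have hn₀ : n₀ ∈ S := Nat.sInf_mem hS
  have hmin : ∀ m ∈ S, n₀ ≤ m := fun m hm => Nat.sInf_le hm
  obtain ⟨p₁, hp₁len, hp₁sup⟩ := hn₀
  set p := p₁.bypass with hpdef
  have hpsup : ∀ x ∈ p.support, x ∈ A := fun x hx =>
    hp₁sup x (p₁.support_bypass_subset hx)
  have hple : p.length ≤ n₀ := hp₁len ▸ p₁.length_bypass_le
  have hpS : p.length ∈ S := ⟨p, rfl, hpsup⟩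
  have hplen : p.length = n₀ := le_antisymm hple (hmin _ hpS)
  have hpmin : ∀ q : G.Walk s t, (∀ x ∈ q.support, x ∈ A) →
      p.length ≤ q.length := by
    intro q hq
    rw [hplen]
    exact hmin _ ⟨q, rfl, hq⟩
  have hpath : p.IsPath := p₁.bypass_isPath
  have hind : Induced p := by
    intro u v hu hv hadj
    by_contra hne
    have hlen2 : ∀ {a b : V} (r : G.Walk a b), a ≠ b →
        r.edges ⊆ p.edges → s(u,v) = s(a,b) → 2 ≤ r.length := by
      intro a b r hab hsub he
      rcases Nat.lt_or_ge r.length 2 with hlt | hge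
      · interval_cases hr : r.length
        · exact absurd (Walk.eq_of_length_eq_zero hr) hab
        · exact absurd (he ▸ hsub (edge_mem_of_length_one r hr)) hne
      · exact hge
    set pt := p.takeUntil u hu with hpt
    set pd := p.dropUntil u hu with hpd
    have hsplit : pt.append pd = p := p.take_spec hu
    have hlen : pt.length + pd.length = p.length := by
      conv_rhs => rw [← hsplit]
      rw [Walk.length_append]
    have hv' : v ∈ pt.support ∨ v ∈ pd.support := by
      rw [← hsplit, Walk.support_append, List.mem_append] at hv
      rcases hv with hv | hv
      · exact Or.inl hv
      · exact Or.inr (List.mem_of_mem_tail hv)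
    rcases hv' with hv' | hv'
    · -- v appears before u
      have h2 : 2 ≤ (pt.dropUntil v hv').length := by
        refine hlen2 _ (G.ne_of_adj hadj).symm
          (fun e he => p.edges_takeUntil_subset hu (pt.edges_dropUntil_subset hv' he)) ?_
        rw [Sym2.eq_swap]
      have hlen' : (pt.takeUntil v hv').length + (pt.dropUntil v hv').length
          = pt.length := by
        conv_rhs => rw [← pt.take_spec hv']
        rw [Walk.length_append]
      set w : G.Walk s t := (pt.takeUntil v hv').append (Walk.cons hadj.symm pd)
      have hwsup : ∀ x ∈ w.support, x ∈ A := by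
        intro x hx
        rw [Walk.support_append, List.mem_append] at hx
        rcases hx with hx | hx
        · exact hpsup x (p.support_takeUntil_subset hu
            (pt.support_takeUntil_subset hv' hx))
        · have := List.mem_of_mem_tail hx
          rw [Walk.support_cons, List.mem_cons] at this
          rcases this with rfl | hx'
          · exact hpsup _ (p.support_takeUntil_subset hu hv')
          · exact hpsup x (p.support_dropUntil_subset hu hx')
      have hwlen : w.length < p.length := by
        have : w.length = (pt.takeUntil v hv').length + (pd.length + 1) := by
          rw [Walk.length_append, Walk.length_cons]
        omega
      exact absurd (hpmin w hwsup) (by omega)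
    · -- v appears after u
      have h2 : 2 ≤ (pd.takeUntil v hv').length := by
        refine hlen2 _ (G.ne_of_adj hadj)
          (fun e he => p.edges_dropUntil_subset hu (pd.edges_takeUntil_subset hv' he)) rfl
      have hlen' : (pd.takeUntil v hv').length + (pd.dropUntil v hv').length
          = pd.length := by
        conv_rhs => rw [← pd.take_spec hv']
        rw [Walk.length_append]
      set w : G.Walk s t := pt.append (Walk.cons hadj (pd.dropUntil v hv'))
      have hwsup : ∀ x ∈ w.support, x ∈ A := by
        intro x hx
        rw [Walk.support_append, List.mem_append] at hx
        rcases hx with hx | hx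
        · exact hpsup x (p.support_takeUntil_subset hu hx)
        · have := List.mem_of_mem_tail hx
          rw [Walk.support_cons, List.mem_cons] at this
          rcases this with rfl | hx'
          · exact hpsup _ hu
          · exact hpsup x (p.support_dropUntil_subset hu
              (pd.support_dropUntil_subset hv' hx'))
      have hwlen : w.length < p.length := by
        have : w.length = pt.length + ((pd.dropUntil v hv').length + 1) := by
          rw [Walk.length_append, Walk.length_cons]
        omega
      exact absurd (hpmin w hwsup) (by omega)
  refine ⟨p.support.toFinset, ⟨p, hpath, hind, rfl⟩, ?_⟩
  intro x hx
  exact hpsup x (List.mem_toFinset.mp hx)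

lemma exists_walk_in_building {B : Finset V} (hB : B ∈ graphBuilding G)
    {s t : V} (hs : s ∈ B) (ht : t ∈ B) :
    ∃ p : G.Walk s t, ∀ x ∈ p.support, x ∈ B := by
  obtain ⟨-, hconn⟩ := hB
  obtain ⟨q⟩ := hconn.preconnected ⟨s, hs⟩ ⟨t, ht⟩
  refine ⟨q.map (SimpleGraph.Embedding.induce (B : Set V)).toHom, ?_⟩
  intro x hx
  have hx : x ∈ (q.map (SimpleGraph.Embedding.induce (B : Set V)).toHom).support := hx
  rw [Walk.support_map, List.mem_map] at hx
  obtain ⟨y, -, rfl⟩ := hx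
  exact y.2

lemma reachable_induce_of_walk {A : Set V} {s t : V} (p : G.Walk s t)
    (h : ∀ x ∈ p.support, x ∈ A) :
    (G.induce A).Reachable ⟨s, h s p.start_mem_support⟩
      ⟨t, h t p.end_mem_support⟩ := by
  induction p with
  | nil => rfl
  | @cons a b c hadj q ih =>
    have hq : ∀ x ∈ q.support, x ∈ A := fun x hx =>
      h x (by rw [Walk.support_cons]; exact List.mem_cons_of_mem _ hx)
    have h1 : (G.induce A).Adj ⟨a, h a (Walk.cons hadj q).start_mem_support⟩
        ⟨b, hq b q.start_mem_support⟩ := by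
      simp only [SimpleGraph.comap_adj, Function.Embedding.coe_subtype]
      exact hadj
    exact (h1.reachable).trans (ih hq)

section Counting

variable [Fintype V]

/-- The finset of all vertex sets of induced paths. -/
noncomputable def pathFinset (G : SimpleGraph V) : Finset (Finset V) :=
  Finset.univ.filter (fun P => ∃ s t : V, IsInducedPathSet G s t P)

lemma mem_pathFinset {P : Finset V} :
    P ∈ pathFinset G ↔ ∃ s t : V, IsInducedPathSet G s t P := by
  simp [pathFinset]

lemma nonempty_of_mem_pathFinset {P : Finset V} (h : P ∈ pathFinset G) :
    P.Nonempty := by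
  rw [mem_pathFinset] at h
  obtain ⟨s, t, p, _, _, rfl⟩ := h
  exact ⟨s, by simp [p.start_mem_support]⟩

lemma card_paths_le (hch : Chordful G) (B : Finset V) :
    ((pathFinset G).filter (· ⊆ B)).card ≤ (B.card + 1).choose 2 := by
  rcases isEmpty_or_nonempty V with hV | hV
  · have h0 : ((pathFinset G).filter (· ⊆ B)) = ∅ :=
      Finset.eq_empty_of_forall_notMem (fun P hP => by
        obtain ⟨v, -⟩ := nonempty_of_mem_pathFinset (Finset.mem_filter.mp hP).1
        exact (IsEmpty.false v))
    rw [h0]; simp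
  · rw [← Finset.card_sym2 B]
    apply Finset.card_le_card_of_injOn (fun P =>
      if h : ∃ s t : V, IsInducedPathSet G s t P then
        s(h.choose, h.choose_spec.choose)
      else s(Classical.arbitrary V, Classical.arbitrary V))
    · intro P hP
      rw [Finset.mem_coe] at ⊢
      beta_reduce
      rw [Finset.mem_coe, Finset.mem_filter] at hP
      obtain ⟨hP1, hPB⟩ := hP
      have h : ∃ s t, IsInducedPathSet G s t P := mem_pathFinset.mp hP1
      rw [dif_pos h]
      obtain ⟨p, hp, hi, hPe⟩ := h.choose_spec.choose_spec
      rw [Finset.mk_mem_sym2_iff]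
      refine ⟨hPB ?_, hPB ?_⟩
      · have hm : h.choose ∈ p.support.toFinset :=
          List.mem_toFinset.mpr p.start_mem_support
        rwa [← hPe] at hm
      · have hm : h.choose_spec.choose ∈ p.support.toFinset :=
          List.mem_toFinset.mpr p.end_mem_support
        rwa [← hPe] at hm
    · intro P hP P' hP' hff
      rw [Finset.mem_coe, Finset.mem_filter] at hP hP'
      have h : ∃ s t, IsInducedPathSet G s t P := mem_pathFinset.mp hP.1
      have h' : ∃ s t, IsInducedPathSet G s t P' := mem_pathFinset.mp hP'.1
      dsimp only at hff
      rw [dif_pos h, dif_pos h'] at hff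
      have h1 := h.choose_spec.choose_spec
      have h2 := h'.choose_spec.choose_spec
      exact pathset_unique' hch h1 h2 hff

lemma choose_le_card_paths (hch : Chordful G) {B : Finset V}
    (hB : B ∈ graphBuilding G) :
    (B.card + 1).choose 2 ≤ ((pathFinset G).filter (· ⊆ B)).card := by
  rw [← Finset.card_sym2 B]
  have hex : ∀ σ ∈ B.sym2,
      ∃ P, IsInducedPathSet G (Quot.out σ).1 (Quot.out σ).2 P ∧ P ⊆ B := by
    intro σ hσ
    exact exists_induced_pathset_subset (exists_walk_in_building hB
      (Finset.mem_sym2_iff.mp hσ _ (Sym2.out_fst_mem σ))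
      (Finset.mem_sym2_iff.mp hσ _ (Sym2.out_snd_mem σ)))
  apply Finset.card_le_card_of_injOn (fun σ =>
    if h : ∃ P, IsInducedPathSet G (Quot.out σ).1 (Quot.out σ).2 P ∧ P ⊆ B
    then h.choose else ∅)
  · intro σ hσ
    rw [Finset.mem_coe] at hσ ⊢
    beta_reduce
    have h := hex σ hσ
    rw [dif_pos h, Finset.mem_filter, mem_pathFinset]
    exact ⟨⟨_, _, h.choose_spec.1⟩, h.choose_spec.2⟩
  · intro σ hσ σ' hσ' hgg
    rw [Finset.mem_coe] at hσ hσ'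
    have h := hex σ hσ
    have h' := hex σ' hσ'
    dsimp only at hgg
    rw [dif_pos h, dif_pos h'] at hgg
    have h1 := h.choose_spec.1
    have h2 := h'.choose_spec.1
    rw [hgg] at h1
    have hout : ∀ τ : Sym2 V, s((Quot.out τ).1, (Quot.out τ).2) = τ :=
      fun τ => Quot.out_eq τ
    rw [← hout σ, ← hout σ']
    exact endpoints_eq h1 h2

lemma univ_mem_graphBuilding (hG : G.Connected) :
    (Finset.univ : Finset V) ∈ graphBuilding G := by
  have hne : Nonempty V := hG.nonempty
  refine ⟨Finset.univ_nonempty, ?_⟩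
  rw [SimpleGraph.connected_iff]
  constructor
  · intro u v
    obtain ⟨p⟩ := hG.preconnected u.1 v.1
    have := reachable_induce_of_walk (A := ((Finset.univ : Finset V) : Set V))
      p (fun y _ => by simp)
    exact this
  · exact ⟨⟨Classical.arbitrary V, by simp⟩⟩

lemma card_pathFinset (hch : Chordful G) (hG : G.Connected) :
    (pathFinset G).card = (Fintype.card V + 1).choose 2 := by
  have h1 := card_paths_le hch (Finset.univ : Finset V)
  have h2 := choose_le_card_paths hch (univ_mem_graphBuilding hG)
  rw [Finset.filter_true_of_mem (fun P _ => Finset.subset_univ P)] at h1 h2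
  rw [Finset.card_univ] at h1 h2
  omega

/-- key inequality: for every subset `A`, a point of the removahedron has
`A`-sum at least the number of induced paths inside `A`. -/
lemma sum_ge_card_paths (hch : Chordful G) {x : V → ℝ}
    (hx : x ∈ Remo (graphBuilding G)) (A : Finset V) :
    ((((pathFinset G).filter (· ⊆ A)).card : ℝ)) ≤ ∑ a ∈ A, x a := by
  induction A using Finset.strongInductionOn with
  | _ A ih =>
    rcases A.eq_empty_or_nonempty with rfl | ⟨a, ha⟩
    · have h0 : (pathFinset G).filter (· ⊆ (∅ : Finset V)) = ∅ := by
        refine Finset.eq_empty_of_forall_notMem (fun P hP => ?_)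
        rw [Finset.mem_filter] at hP
        obtain ⟨v, hv⟩ := nonempty_of_mem_pathFinset hP.1
        exact absurd (hP.2 hv) (Finset.notMem_empty v)
      rw [h0]
      simp
    · set B : Finset V :=
        A.filter (fun v => ∃ p : G.Walk a v, ∀ y ∈ p.support, y ∈ A)
        with hBdef
      have haB : a ∈ B := by
        rw [hBdef, Finset.mem_filter]
        refine ⟨ha, Walk.nil, ?_⟩
        intro y hy
        rw [Walk.support_nil, List.mem_singleton] at hy
        exact hy ▸ ha
      have hBA : B ⊆ A := Finset.filter_subset _ _
      have hkey : ∀ {v : V} (p : G.Walk a v), (∀ y ∈ p.support, y ∈ A) →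
          ∀ y ∈ p.support, y ∈ B := by
        intro v p hp y hy
        rw [hBdef, Finset.mem_filter]
        exact ⟨hp y hy, p.takeUntil y hy,
          fun z hz => hp z (p.support_takeUntil_subset hy hz)⟩
      have hBmem : ∀ u ∈ B, u ∈ A ∧ ∃ p : G.Walk a u, ∀ y ∈ p.support, y ∈ A := by
        intro u hu
        rw [hBdef, Finset.mem_filter] at hu
        exact hu
      have hBbuild : B ∈ graphBuilding G := by
        refine ⟨⟨a, haB⟩, ?_⟩
        rw [SimpleGraph.connected_iff]
        refine ⟨?_, ⟨⟨a, Finset.mem_coe.mpr haB⟩⟩⟩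
        intro u v
        obtain ⟨hu, pu, hpu⟩ := hBmem u.1 (Finset.mem_coe.mp u.2)
        obtain ⟨hv, pv, hpv⟩ := hBmem v.1 (Finset.mem_coe.mp v.2)
        have r1 := reachable_induce_of_walk (A := (B : Set V)) pu
          (fun y hy => Finset.mem_coe.mpr (hkey pu hpu y hy))
        have r2 := reachable_induce_of_walk (A := (B : Set V)) pv
          (fun y hy => Finset.mem_coe.mpr (hkey pv hpv y hy))
        exact r1.symm.trans r2
      have hsplitP : ∀ P ∈ pathFinset G, P ⊆ A → P ⊆ B ∨ P ⊆ A \ B := by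
        intro P hP hPA
        by_cases hint : ∃ u ∈ P, u ∈ B
        · left
          obtain ⟨u, huP, huB⟩ := hint
          obtain ⟨smm, tmm, p, hp, hi, hPe⟩ := mem_pathFinset.mp hP
          subst hPe
          rw [List.mem_toFinset] at huP
          intro v hvP
          rw [List.mem_toFinset] at hvP
          obtain ⟨-, pu, hpu⟩ := hBmem u huB
          have hPsubA : ∀ y ∈ p.support, y ∈ A := fun y hy =>
            hPA (List.mem_toFinset.mpr hy)
          set w : G.Walk a v :=
            pu.append (((p.takeUntil u huP).reverse).append (p.takeUntil v hvP))
            with hwdef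
          have hw : ∀ y ∈ w.support, y ∈ A := by
            intro y hy
            rw [hwdef, Walk.support_append, List.mem_append] at hy
            rcases hy with hy | hy
            · exact hpu y hy
            · have hy2 := List.mem_of_mem_tail hy
              rw [Walk.support_append, List.mem_append] at hy2
              rcases hy2 with hy' | hy'
              · rw [Walk.support_reverse, List.mem_reverse] at hy'
                exact hPsubA y (p.support_takeUntil_subset _ hy')
              · exact hPsubA y
                  (p.support_takeUntil_subset _ (List.mem_of_mem_tail hy'))
          exact hkey w hw v w.end_mem_support
        · right
          intro v hv
          rw [Finset.mem_sdiff]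
          push_neg at hint
          exact ⟨hPA hv, hint v hv⟩
      have hcount : ((pathFinset G).filter (· ⊆ A)).card ≤
          ((pathFinset G).filter (· ⊆ B)).card
            + ((pathFinset G).filter (· ⊆ A \ B)).card := by
        refine le_trans (Finset.card_le_card ?_) (Finset.card_union_le _ _)
        intro P hP
        rw [Finset.mem_filter] at hP
        rcases hsplitP P hP.1 hP.2 with h | h
        · exact Finset.mem_union_left _ (Finset.mem_filter.mpr ⟨hP.1, h⟩)
        · exact Finset.mem_union_right _ (Finset.mem_filter.mpr ⟨hP.1, h⟩)
      have hssub : A \ B ⊂ A := Finset.sdiff_ssubset hBA ⟨a, haB⟩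
      have hIH := ih (A \ B) hssub
      have hB2 := hx.2 B hBbuild
      have hC1 : (((pathFinset G).filter (· ⊆ B)).card : ℝ)
          ≤ ((B.card + 1).choose 2 : ℕ) := by
        exact_mod_cast card_paths_le hch B
      have hsum : ∑ y ∈ A \ B, x y + ∑ y ∈ B, x y = ∑ y ∈ A, x y :=
        Finset.sum_sdiff hBA
      have hcount' : (((pathFinset G).filter (· ⊆ A)).card : ℝ) ≤
          (((pathFinset G).filter (· ⊆ B)).card : ℝ)
            + (((pathFinset G).filter (· ⊆ A \ B)).card : ℝ) := by
        exact_mod_cast hcount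
      linarith

end Counting

section ConvexPart

variable [Fintype V]

lemma simplexFace_props {T : Finset V} {y : V → ℝ} (hy : y ∈ simplexFace T) :
    (∀ s, 0 ≤ y s) ∧ (∀ s, s ∉ T → y s = 0) ∧ ∑ s : V, y s = 1 := by
  have hsub : simplexFace T ⊆ {z : V → ℝ | (∀ s, 0 ≤ z s) ∧
      (∀ s, s ∉ T → z s = 0) ∧ ∑ s : V, z s = 1} := by
    apply convexHull_min
    · rintro z ⟨t, ht, rfl⟩
      refine ⟨fun s => ?_, fun s hs => ?_, ?_⟩
      · rw [Pi.single_apply]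
        split <;> norm_num
      · rw [Pi.single_apply]
        split
        · rename_i h
          exact absurd (by rw [h]; exact ht) hs
        · rfl
      · simp only [Pi.single_apply]
        rw [Finset.sum_ite_eq' Finset.univ t (fun _ => (1 : ℝ))]
        simp
    · intro z hz z' hz' μa μb hμa hμb hab
      refine ⟨fun s => ?_, fun s hs => ?_, ?_⟩
      · have h1 := hz.1 s
        have h2 := hz'.1 s
        simp only [Pi.add_apply, Pi.smul_apply, smul_eq_mul]
        nlinarith
      · simp only [Pi.add_apply, Pi.smul_apply, smul_eq_mul,
          hz.2.1 s hs, hz'.2.1 s hs]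
        ring
      · simp only [Pi.add_apply, Pi.smul_apply, smul_eq_mul]
        rw [Finset.sum_add_distrib, ← Finset.mul_sum, ← Finset.mul_sum,
          hz.2.2, hz'.2.2]
        linarith
  exact hsub hy

lemma single_mem_simplexFace {T : Finset V} {t : V} (ht : t ∈ T) :
    Pi.single t (1 : ℝ) ∈ simplexFace T :=
  subset_convexHull ℝ _ ⟨t, ht, rfl⟩

lemma isCompact_simplexFace (T : Finset V) : IsCompact (simplexFace T) := by
  apply Set.Finite.isCompact_convexHull
  have he : {x : V → ℝ | ∃ t ∈ T, x = Pi.single t 1} =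
      (fun t => Pi.single t (1 : ℝ)) '' ↑T := by
    ext z
    constructor
    · rintro ⟨t, ht, rfl⟩
      exact ⟨t, ht, rfl⟩
    · rintro ⟨t, ht, rfl⟩
      exact ⟨t, ht, rfl⟩
  rw [he]
  exact T.finite_toSet.image _

lemma star_nonneg (hch : Chordful G) (hG : G.Connected) {x : V → ℝ}
    (hx : x ∈ Remo (graphBuilding G)) :
    ∀ (k : ℕ) (w : V → ℝ), (∀ s, 0 ≤ w s) →
      (Finset.univ.filter (fun s => 0 < w s)).card ≤ k →
      ∑ s : V, w s * x s ≤
        ∑ P ∈ pathFinset G, (if h : P.Nonempty then P.sup' h w else 0) := by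
  have hzero : ∀ (w : V → ℝ), (∀ s, w s = 0) →
      ∑ s : V, w s * x s ≤
        ∑ P ∈ pathFinset G, (if h : P.Nonempty then P.sup' h w else 0) := by
    intro w hall
    have hL : ∑ s : V, w s * x s = 0 := by
      apply Finset.sum_eq_zero
      intro s _
      rw [hall s, zero_mul]
    rw [hL]
    apply Finset.sum_nonneg
    intro P hP
    have hPne := nonempty_of_mem_pathFinset hP
    rw [dif_pos hPne]
    obtain ⟨t, ht, hts⟩ := Finset.exists_mem_eq_sup' hPne w
    rw [hts, hall t]
  intro k
  induction k with
  | zero =>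
    intro w h0 hk
    refine hzero w (fun s => ?_)
    by_contra hs
    have h1 : 0 < w s := lt_of_le_of_ne (h0 s) (Ne.symm hs)
    have h2 : s ∈ Finset.univ.filter (fun s => 0 < w s) :=
      Finset.mem_filter.mpr ⟨Finset.mem_univ s, h1⟩
    rw [Finset.card_eq_zero.mp (Nat.le_zero.mp hk)] at h2
    exact absurd h2 (Finset.notMem_empty s)
  | succ k ihk =>
    intro w h0 hk
    by_cases hA : (Finset.univ.filter (fun s => 0 < w s)).Nonempty
    · set A := Finset.univ.filter (fun s => 0 < w s) with hAdef
      obtain ⟨s₀, hs₀A, hmin⟩ := Finset.exists_min_image A w hA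
      set lam := w s₀ with hlam
      have hlam0 : 0 < lam := (Finset.mem_filter.mp hs₀A).2
      set w' : V → ℝ := fun s => if 0 < w s then w s - lam else 0 with hw'
      have hw'eq : ∀ s, 0 < w s → w' s = w s - lam := by
        intro s hs
        rw [hw']
        exact if_pos hs
      have hw'eq0 : ∀ s, ¬ 0 < w s → w' s = 0 := by
        intro s hs
        rw [hw']
        exact if_neg hs
      have hweq0 : ∀ s, ¬ 0 < w s → w s = 0 := by
        intro s hs
        linarith [h0 s, not_lt.mp hs]
      have h0' : ∀ s, 0 ≤ w' s := by
        intro s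
        by_cases hs : 0 < w s
        · rw [hw'eq s hs]
          have : s ∈ A := Finset.mem_filter.mpr ⟨Finset.mem_univ s, hs⟩
          linarith [hmin s this]
        · rw [hw'eq0 s hs]
      have hsub : Finset.univ.filter (fun s => 0 < w' s) ⊆ A.erase s₀ := by
        intro s hs
        rw [Finset.mem_filter] at hs
        have hs' := hs.2
        by_cases hws : 0 < w s
        · rw [hw'eq s hws] at hs'
          refine Finset.mem_erase.mpr
            ⟨?_, Finset.mem_filter.mpr ⟨Finset.mem_univ s, hws⟩⟩
          intro hss₀
          rw [hss₀] at hs'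
          rw [hlam] at hs'
          linarith
        · rw [hw'eq0 s hws] at hs'
          linarith
      have hApos : 0 < A.card := Finset.card_pos.mpr hA
      have hcard' : (Finset.univ.filter (fun s => 0 < w' s)).card ≤ k := by
        have h1 := Finset.card_le_card hsub
        rw [Finset.card_erase_of_mem hs₀A] at h1
        omega
      have hIH := ihk w' h0' hcard'
      set C := Finset.univ \ A with hC
      have hsC : ∀ s ∈ C, w s = 0 ∧ w' s = 0 := by
        intro s hsc
        have hnA : s ∉ A := (Finset.mem_sdiff.mp hsc).2
        have hns : ¬ 0 < w s := fun h =>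
          hnA (Finset.mem_filter.mpr ⟨Finset.mem_univ s, h⟩)
        exact ⟨hweq0 s hns, hw'eq0 s hns⟩
      have hsA : ∀ s ∈ A, w s = w' s + lam := by
        intro s hsa
        have hws : 0 < w s := (Finset.mem_filter.mp hsa).2
        rw [hw'eq s hws]
        ring
      have hLHS : ∑ s : V, w s * x s
          = ∑ s : V, w' s * x s + lam * ∑ s ∈ A, x s := by
        calc ∑ s : V, w s * x s
            = ∑ s ∈ C, w s * x s + ∑ s ∈ A, w s * x s :=
              (Finset.sum_sdiff (Finset.subset_univ A)).symm
          _ = ∑ s ∈ C, w' s * x s + ∑ s ∈ A, (w' s * x s + lam * x s) := by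
              congr 1
              · apply Finset.sum_congr rfl
                intro s hsc
                rw [(hsC s hsc).1, (hsC s hsc).2]
              · apply Finset.sum_congr rfl
                intro s hsa
                rw [hsA s hsa]
                ring
          _ = (∑ s ∈ C, w' s * x s + ∑ s ∈ A, w' s * x s)
                + lam * ∑ s ∈ A, x s := by
              rw [Finset.sum_add_distrib, Finset.mul_sum]
              ring
          _ = ∑ s : V, w' s * x s + lam * ∑ s ∈ A, x s := by
              rw [Finset.sum_sdiff (Finset.subset_univ A)]
      have hbound : ∑ s ∈ A, x s ≤ ((pathFinset G).card : ℝ)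
          - (((pathFinset G).filter (· ⊆ C)).card : ℝ) := by
        have h1 : ∑ s ∈ C, x s + ∑ s ∈ A, x s = ∑ s : V, x s :=
          Finset.sum_sdiff (Finset.subset_univ A)
        have h2 := hx.1
        have h3 := sum_ge_card_paths hch hx C
        have h4 : ((pathFinset G).card : ℝ)
            = (((Fintype.card V + 1).choose 2 : ℕ) : ℝ) := by
          exact_mod_cast congrArg (Nat.cast : ℕ → ℝ) (card_pathFinset hch hG)
        rw [h4]
        push_cast at h2 ⊢
        linarith
      have hRHS : ∀ P ∈ pathFinset G,
          (if h : P.Nonempty then P.sup' h w else 0)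
          = (if h : P.Nonempty then P.sup' h w' else 0)
            + (if ¬ P ⊆ C then lam else 0) := by
        intro P hP
        have hPne := nonempty_of_mem_pathFinset hP
        rw [dif_pos hPne, dif_pos hPne]
        by_cases hPC : P ⊆ C
        · rw [if_neg (not_not_intro hPC)]
          have hw0 : ∀ t ∈ P, w t = 0 := by
            intro t htP
            have hnA : t ∉ A := fun htA => (Finset.mem_sdiff.mp (hPC htP)).2 htA
            exact hweq0 t (fun h => hnA (Finset.mem_filter.mpr ⟨Finset.mem_univ t, h⟩))
          have hw'0 : ∀ t ∈ P, w' t = 0 := by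
            intro t htP
            apply hw'eq0
            rw [hw0 t htP]
            exact lt_irrefl 0
          obtain ⟨t1, ht1⟩ := id hPne
          have e1 : P.sup' hPne w = 0 := by
            apply le_antisymm (Finset.sup'_le _ _ (fun b hb => (hw0 b hb).le))
            have hle := Finset.le_sup' w ht1
            rw [hw0 t1 ht1] at hle
            exact hle
          have e2 : P.sup' hPne w' = 0 := by
            apply le_antisymm (Finset.sup'_le _ _ (fun b hb => (hw'0 b hb).le))
            have hle := Finset.le_sup' w' ht1
            rw [hw'0 t1 ht1] at hle
            exact hle
          rw [e1, e2]
          ring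
        · rw [if_pos hPC]
          obtain ⟨t₀, ht₀P, ht₀A⟩ : ∃ t ∈ P, t ∈ A := by
            by_contra hcon
            push_neg at hcon
            exact hPC (fun v hv => Finset.mem_sdiff.mpr
              ⟨Finset.mem_univ v, fun hvA => hcon v hv hvA⟩)
          apply le_antisymm
          · apply Finset.sup'_le
            intro b hb
            by_cases hbA : b ∈ A
            · have hwb : 0 < w b := (Finset.mem_filter.mp hbA).2
              have he := hw'eq b hwb
              have hle := Finset.le_sup' w' hb
              linarith
            · have hwb : w b = 0 :=
                hweq0 b (fun h => hbA (Finset.mem_filter.mpr ⟨Finset.mem_univ b, h⟩))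
              have h1 : (0 : ℝ) ≤ P.sup' hPne w' :=
                le_trans (h0' b) (Finset.le_sup' w' hb)
              linarith
          · obtain ⟨tm, htm, htmeq⟩ := Finset.exists_mem_eq_sup' hPne w'
            by_cases htm0 : 0 < w' tm
            · have he : w' tm = w tm - lam := by
                by_cases h : 0 < w tm
                · exact hw'eq tm h
                · rw [hw'eq0 tm h] at htm0
                  linarith
              have hle := Finset.le_sup' w htm
              rw [htmeq]
              linarith
            · have h1 : P.sup' hPne w' = 0 := by
                rw [htmeq]
                linarith [h0' tm, not_lt.mp htm0]
              have h2 : lam ≤ w t₀ := hmin t₀ ht₀A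
              have h3 := Finset.le_sup' w ht₀P
              rw [h1]
              linarith
      have hRHSsum : ∑ P ∈ pathFinset G, (if h : P.Nonempty then P.sup' h w else 0)
          = ∑ P ∈ pathFinset G, (if h : P.Nonempty then P.sup' h w' else 0)
            + lam * (((pathFinset G).filter (fun P => ¬ P ⊆ C)).card : ℝ) := by
        rw [Finset.sum_congr rfl hRHS, Finset.sum_add_distrib]
        congr 1
        rw [← Finset.sum_filter, Finset.sum_const, nsmul_eq_mul, mul_comm]
      have hcountC : (((pathFinset G).filter (fun P => ¬ P ⊆ C)).card : ℝ)
          = ((pathFinset G).card : ℝ)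
            - (((pathFinset G).filter (· ⊆ C)).card : ℝ) := by
        have h := Finset.card_filter_add_card_filter_not
          (s := pathFinset G) (p := (· ⊆ C))
        have h' : (((pathFinset G).filter (· ⊆ C)).card : ℝ)
            + (((pathFinset G).filter (fun P => ¬ P ⊆ C)).card : ℝ)
            = ((pathFinset G).card : ℝ) := by
          exact_mod_cast h
        linarith
      rw [hLHS, hRHSsum, hcountC]
      have hmul : lam * (∑ s ∈ A, x s) ≤ lam * (((pathFinset G).card : ℝ)
          - (((pathFinset G).filter (· ⊆ C)).card : ℝ)) :=
        mul_le_mul_of_nonneg_left hbound hlam0.le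
      linarith
    · refine hzero w (fun s => ?_)
      by_contra hs
      exact hA ⟨s, Finset.mem_filter.mpr
        ⟨Finset.mem_univ s, lt_of_le_of_ne (h0 s) (Ne.symm hs)⟩⟩

lemma star (hch : Chordful G) (hG : G.Connected) {x : V → ℝ}
    (hx : x ∈ Remo (graphBuilding G)) (w : V → ℝ) :
    ∑ s : V, w s * x s ≤
      ∑ P ∈ pathFinset G, (if h : P.Nonempty then P.sup' h w else 0) := by
  have hNe : Nonempty V := hG.nonempty
  obtain ⟨c0, -, hc⟩ := Finset.exists_min_image Finset.univ w Finset.univ_nonempty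
  set c := w c0 with hcdef
  set w' : V → ℝ := fun s => w s - c with hw'
  have h0' : ∀ s, 0 ≤ w' s := fun s =>
    sub_nonneg.mpr (hc s (Finset.mem_univ s))
  have h := star_nonneg hch hG hx
    (Finset.univ.filter (fun s => 0 < w' s)).card w' h0' le_rfl
  have hcardP : ((pathFinset G).card : ℝ)
      = (((Fintype.card V + 1).choose 2 : ℕ) : ℝ) := by
    exact_mod_cast congrArg (Nat.cast : ℕ → ℝ) (card_pathFinset hch hG)
  have hx1 := hx.1
  have hL : ∑ s : V, w s * x s
      = ∑ s : V, w' s * x s + c * ∑ s : V, x s := by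
    rw [Finset.mul_sum, ← Finset.sum_add_distrib]
    apply Finset.sum_congr rfl
    intro s _
    rw [hw']
    ring
  have hR : ∀ P ∈ pathFinset G,
      (if h : P.Nonempty then P.sup' h w else 0)
      = (if h : P.Nonempty then P.sup' h w' else 0) + c := by
    intro P hP
    have hPne := nonempty_of_mem_pathFinset hP
    rw [dif_pos hPne, dif_pos hPne]
    apply le_antisymm
    · apply Finset.sup'_le
      intro b hb
      have hle := Finset.le_sup' w' hb
      have : w' b = w b - c := rfl
      linarith
    · obtain ⟨tm, htm, htmeq⟩ := Finset.exists_mem_eq_sup' hPne w'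
      have hle := Finset.le_sup' w htm
      have : w' tm = w tm - c := rfl
      rw [htmeq]
      linarith
  have hRs : ∑ P ∈ pathFinset G, (if h : P.Nonempty then P.sup' h w else 0)
      = ∑ P ∈ pathFinset G, (if h : P.Nonempty then P.sup' h w' else 0)
        + c * ((pathFinset G).card : ℝ) := by
    rw [Finset.sum_congr rfl hR, Finset.sum_add_distrib, Finset.sum_const,
      nsmul_eq_mul, mul_comm]
  rw [hL, hRs, hcardP, hx1]
  linarith

end ConvexPart

end RemoProofAux

/-- For a finite connected chordful graph `G`, the removahedron of the
graphical building set `𝓑(G)` equals the Minkowski sum, with all coefficients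
equal to `1`, of the faces of the standard simplex corresponding to the vertex
sets of all induced paths of `G` (including the singletons as trivial paths). -/
theorem remo_graphBuilding_eq_minkowski_sum_of_paths
    {V : Type*} [Fintype V] [DecidableEq V]
    (G : SimpleGraph V) (hG : G.Connected)
    (hchordful : ∀ (v : V) (c : G.Walk v v), c.IsCycle →
      G.IsClique {x | x ∈ c.support}) :
    Remo (graphBuilding G) =
      ∑ᶠ P ∈ {P : Finset V | ∃ s t : V, IsInducedPathSet G s t P},
        simplexFace P := by
  classical
  have hch : RemoProofAux.Chordful G := hchordful
  have hset : {P : Finset V | ∃ s t : V, IsInducedPathSet G s t P}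
      = ↑(RemoProofAux.pathFinset G) := by
    ext P
    simp [RemoProofAux.mem_pathFinset]
  rw [hset, finsum_mem_coe_finset]
  have hcard := RemoProofAux.card_pathFinset hch hG
  apply Set.Subset.antisymm
  · -- Remo ⊆ Minkowski sum
    intro x hx
    by_contra hxQ
    have hQconv : Convex ℝ (∑ P ∈ RemoProofAux.pathFinset G, simplexFace P) :=
      Finset.sum_induction _ _ (fun a b ha hb => ha.add hb)
        (by rw [← Set.singleton_zero]; exact convex_singleton 0)
        (fun P _ => convex_convexHull ℝ _)
    have hQcomp : IsCompact (∑ P ∈ RemoProofAux.pathFinset G, simplexFace P) :=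
      Finset.sum_induction _ _ (fun a b ha hb => ha.add hb)
        (by rw [← Set.singleton_zero]; exact isCompact_singleton)
        (fun P _ => RemoProofAux.isCompact_simplexFace P)
    obtain ⟨f, u, hfu, hux⟩ :=
      geometric_hahn_banach_closed_point hQconv hQcomp.isClosed hxQ
    set w : V → ℝ := fun s => f (Pi.single s 1) with hw
    have hsingle : ∀ s : V,
        (fun j => if s = j then (1 : ℝ) else 0) = Pi.single s 1 := by
      intro s
      funext j
      rw [Pi.single_apply]
      by_cases h : s = j
      · rw [if_pos h, if_pos h.symm]
      · rw [if_neg h, if_neg (fun hh => h hh.symm)]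
    have hfy : ∀ y : V → ℝ, f y = ∑ s : V, w s * y s := by
      intro y
      calc f y = f (∑ i : V, y i • fun j => if i = j then (1 : ℝ) else 0) := by
            rw [← pi_eq_sum_univ y]
        _ = ∑ i : V, w i * y i := by
            rw [map_sum]
            apply Finset.sum_congr rfl
            intro i _
            rw [hsingle i, map_smul, smul_eq_mul, hw]
            ring
    have hNe : Nonempty V := hG.nonempty
    set mx : Finset V → V := fun P =>
      if h : P.Nonempty then (Finset.exists_max_image P w h).choose
      else Classical.arbitrary V with hmx
    have hmx1 : ∀ (P : Finset V) (h : P.Nonempty),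
        mx P ∈ P ∧ ∀ u' ∈ P, w u' ≤ w (mx P) := by
      intro P h
      rw [hmx]
      dsimp only
      rw [dif_pos h]
      obtain ⟨h1, h2⟩ := (Finset.exists_max_image P w h).choose_spec
      exact ⟨h1, h2⟩
    set q : V → ℝ := ∑ P ∈ RemoProofAux.pathFinset G, Pi.single (mx P) 1
      with hq
    have hqQ : q ∈ ∑ P ∈ RemoProofAux.pathFinset G, simplexFace P := by
      rw [Set.mem_finset_sum]
      exact ⟨fun P => Pi.single (mx P) 1,
        fun {P} hP => RemoProofAux.single_mem_simplexFace
          (hmx1 P (RemoProofAux.nonempty_of_mem_pathFinset hP)).1, hq.symm⟩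
    have hfq : f q = ∑ P ∈ RemoProofAux.pathFinset G,
        (if h : P.Nonempty then P.sup' h w else 0) := by
      rw [hq, map_sum]
      apply Finset.sum_congr rfl
      intro P hP
      have hPne := RemoProofAux.nonempty_of_mem_pathFinset hP
      rw [dif_pos hPne]
      have h1 : f (Pi.single (mx P) 1) = w (mx P) := by rw [hw]
      rw [h1]
      exact le_antisymm (Finset.le_sup' w (hmx1 P hPne).1)
        (Finset.sup'_le _ _ (fun b hb => (hmx1 P hPne).2 b hb))
    have hstar := RemoProofAux.star hch hG hx w
    have hfx : f x = ∑ s : V, w s * x s := hfy x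
    have hlt := hfu q hqQ
    rw [hfq] at hlt
    linarith
  · -- Minkowski sum ⊆ Remo
    intro x hxQ
    rw [Set.mem_finset_sum] at hxQ
    obtain ⟨g, hg, hgx⟩ := hxQ
    have hgp : ∀ P ∈ RemoProofAux.pathFinset G, (∀ s, 0 ≤ g P s) ∧
        (∀ s, s ∉ P → g P s = 0) ∧ ∑ s : V, g P s = 1 :=
      fun P hP => RemoProofAux.simplexFace_props (hg hP)
    constructor
    · rw [← hgx]
      calc ∑ s : V, (∑ P ∈ RemoProofAux.pathFinset G, g P) s
          = ∑ s : V, ∑ P ∈ RemoProofAux.pathFinset G, g P s := by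
            apply Finset.sum_congr rfl
            intro s _
            rw [Finset.sum_apply]
        _ = ∑ P ∈ RemoProofAux.pathFinset G, ∑ s : V, g P s :=
            Finset.sum_comm
        _ = ∑ P ∈ RemoProofAux.pathFinset G, (1 : ℝ) :=
            Finset.sum_congr rfl (fun P hP => (hgp P hP).2.2)
        _ = ((RemoProofAux.pathFinset G).card : ℝ) := by
            rw [Finset.sum_const, nsmul_eq_mul, mul_one]
        _ = ((Fintype.card V + 1).choose 2 : ℝ) := by
            exact_mod_cast congrArg (Nat.cast : ℕ → ℝ) hcard
    · intro B hB
      have hC2 := RemoProofAux.choose_le_card_paths hch hB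
      calc ((B.card + 1).choose 2 : ℝ)
          ≤ (((RemoProofAux.pathFinset G).filter (· ⊆ B)).card : ℝ) := by
            exact_mod_cast hC2
        _ = ∑ P ∈ (RemoProofAux.pathFinset G).filter (· ⊆ B), (1 : ℝ) := by
            rw [Finset.sum_const, nsmul_eq_mul, mul_one]
        _ = ∑ P ∈ (RemoProofAux.pathFinset G).filter (· ⊆ B),
              ∑ b ∈ B, g P b := by
            apply Finset.sum_congr rfl
            intro P hP
            rw [Finset.mem_filter] at hP
            have h1 : ∑ b ∈ B, g P b = ∑ b : V, g P b := by
              apply Finset.sum_subset (Finset.subset_univ B)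
              intro y _ hyB
              exact (hgp P hP.1).2.1 y (fun hyP => hyB (hP.2 hyP))
            rw [h1, (hgp P hP.1).2.2]
        _ ≤ ∑ P ∈ RemoProofAux.pathFinset G, ∑ b ∈ B, g P b := by
            apply Finset.sum_le_sum_of_subset_of_nonneg
              (Finset.filter_subset _ _)
            intro P hP _
            exact Finset.sum_nonneg (fun b _ => (hgp P hP).1 b)
        _ = ∑ b ∈ B, x b := by
            rw [Finset.sum_comm, ← hgx]
            apply Finset.sum_congr rfl
            intro b _
            rw [Finset.sum_apply]
end
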